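/- arXiv:1801.05550 — 4 statements merged into one kernel-verified Lean document; each statement's English description precedes it below -/
import Mathlib

section
/- For 1 ≤ p ≤ q < ∞, the discrete Morrey space ℓ^p_q(ℤ^d) is complete with respect to the norm ‖x‖_{ℓ^p_q(ℤ^d)} = sup_{m,N} |S_{m,N}|^{1/q−1/p} (Σ_{k ∈ S_{m,N}} |x(k)|^p)^{1/p}. -/
open scoped BigOperators ENNReal

noncomputable section

/-- The discrete cube `S_{m,N} = {k : ‖k - m‖_∞ ≤ N}` in `ℤ^d`. -/
def cubeS (d : ℕ) (m : Fin d → ℤ) (N : ℕ) : Finset (Fin d → ℤ) :=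
  Finset.Icc (fun i => m i - N) (fun i => m i + N)

/-- `R_{m,N}`: the cube `S_{m,N}` with points having some coordinate `m i + N` removed. -/
def cubeR (d : ℕ) (m : Fin d → ℤ) (N : ℕ) : Finset (Fin d → ℤ) :=
  Finset.Ico (fun i => m i - N) (fun i => m i + N)

/-- The sup-norm `‖k‖_∞` of a point of `ℤ^d`, as a natural number. -/
def snorm' (d : ℕ) (k : Fin d → ℤ) : ℕ :=
  Finset.univ.sup fun i => (k i).natAbs

/-- The (centered, odd) discrete Hardy–Littlewood maximal operator. -/
def maxOp (d : ℕ) (x : (Fin d → ℤ) → ℝ) (m : Fin d → ℤ) : ℝ :=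
  ⨆ N : ℕ, (∑ k ∈ cubeS d m N, |x k|) / (2 * N + 1) ^ d

/-- The discrete Morrey norm `‖x‖_{ℓ^p_q(ℤ^d)}`. -/
def morreyNorm (d : ℕ) (p q : ℝ) (x : (Fin d → ℤ) → ℝ) : ℝ :=
  ⨆ mN : (Fin d → ℤ) × ℕ,
    (((2 * mN.2 + 1 : ℝ) ^ d) ^ (1 / q - 1 / p)) *
      (∑ k ∈ cubeS d mN.1 mN.2, |x k| ^ p) ^ (1 / p)

/-- Membership in the discrete Morrey space: the defining supremum is finite. -/
def MemMorrey (d : ℕ) (p q : ℝ) (x : (Fin d → ℤ) → ℝ) : Prop :=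
  BddAbove (Set.range fun mN : (Fin d → ℤ) × ℕ =>
    (((2 * mN.2 + 1 : ℝ) ^ d) ^ (1 / q - 1 / p)) *
      (∑ k ∈ cubeS d mN.1 mN.2, |x k| ^ p) ^ (1 / p))

namespace MorreyAux

/-- The generic term of the supremum defining the Morrey norm. -/
def mterm (d : ℕ) (p q : ℝ) (x : (Fin d → ℤ) → ℝ) (mN : (Fin d → ℤ) × ℕ) : ℝ :=
  (((2 * mN.2 + 1 : ℝ) ^ d) ^ (1 / q - 1 / p)) *
      (∑ k ∈ cubeS d mN.1 mN.2, |x k| ^ p) ^ (1 / p)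

lemma morreyNorm_eq (d : ℕ) (p q : ℝ) (x : (Fin d → ℤ) → ℝ) :
    morreyNorm d p q x = ⨆ mN, mterm d p q x mN := rfl

lemma memMorrey_iff (d : ℕ) (p q : ℝ) (x : (Fin d → ℤ) → ℝ) :
    MemMorrey d p q x ↔ BddAbove (Set.range (mterm d p q x)) := Iff.rfl

lemma cubeS_zero (d : ℕ) (m : Fin d → ℤ) : cubeS d m 0 = {m} := by
  simp [cubeS, Finset.Icc_self]

lemma mterm_nonneg (d : ℕ) (p q : ℝ) (x : (Fin d → ℤ) → ℝ) (mN : (Fin d → ℤ) × ℕ) :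
    0 ≤ mterm d p q x mN := by
  apply mul_nonneg
  · positivity
  · exact Real.rpow_nonneg
      (Finset.sum_nonneg fun k _ => Real.rpow_nonneg (abs_nonneg _) _) _

lemma mterm_single (d : ℕ) (p q : ℝ) (hp : 1 ≤ p) (x : (Fin d → ℤ) → ℝ) (k : Fin d → ℤ) :
    mterm d p q x (k, 0) = |x k| := by
  have hp0 : p ≠ 0 := by linarith
  simp only [mterm, cubeS_zero, Finset.sum_singleton, Nat.cast_zero, mul_zero, zero_add,
    one_pow, Real.one_rpow, one_mul]
  rw [← Real.rpow_mul (abs_nonneg _), mul_one_div_cancel hp0, Real.rpow_one]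

lemma abs_le_morreyNorm {d : ℕ} {p q : ℝ} (hp : 1 ≤ p) {x : (Fin d → ℤ) → ℝ}
    (hx : MemMorrey d p q x) (k : Fin d → ℤ) : |x k| ≤ morreyNorm d p q x := by
  rw [← mterm_single d p q hp x k, morreyNorm_eq]
  exact le_ciSup hx (k, 0)

lemma mterm_sub_le (d : ℕ) (p q : ℝ) (hp : 1 ≤ p) (u v : (Fin d → ℤ) → ℝ)
    (mN : (Fin d → ℤ) × ℕ) :
    mterm d p q (u - v) mN ≤ mterm d p q u mN + mterm d p q v mN := by
  have hc : (0:ℝ) ≤ ((2 * mN.2 + 1 : ℝ) ^ d) ^ (1 / q - 1 / p) := by positivity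
  rw [mterm, mterm, mterm, ← mul_add]
  apply mul_le_mul_of_nonneg_left _ hc
  have := Real.Lp_add_le (cubeS d mN.1 mN.2) u (-v) hp
  simpa [sub_eq_add_neg] using this

lemma memMorrey_sub {d : ℕ} {p q : ℝ} (hp : 1 ≤ p) {u v : (Fin d → ℤ) → ℝ}
    (hu : MemMorrey d p q u) (hv : MemMorrey d p q v) : MemMorrey d p q (u - v) := by
  obtain ⟨Cu, hCu⟩ := hu
  obtain ⟨Cv, hCv⟩ := hv
  refine ⟨Cu + Cv, ?_⟩
  rintro _ ⟨mN, rfl⟩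
  exact (mterm_sub_le d p q hp u v mN).trans
    (add_le_add (hCu (Set.mem_range_self mN)) (hCv (Set.mem_range_self mN)))

lemma morreyNorm_le {d : ℕ} {p q : ℝ} {x : (Fin d → ℤ) → ℝ} {C : ℝ} (hC : 0 ≤ C)
    (h : ∀ mN, mterm d p q x mN ≤ C) : morreyNorm d p q x ≤ C := by
  rw [morreyNorm_eq]
  exact Real.iSup_le h hC

lemma mterm_le_morreyNorm {d : ℕ} {p q : ℝ} {x : (Fin d → ℤ) → ℝ}
    (hx : MemMorrey d p q x) (mN : (Fin d → ℤ) × ℕ) :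
    mterm d p q x mN ≤ morreyNorm d p q x :=
  le_ciSup hx mN

/-- Continuity of the term in the function, for pointwise-converging sequences. -/
lemma mterm_tendsto {d : ℕ} {p q : ℝ} (hp : 1 ≤ p) {z : ℕ → (Fin d → ℤ) → ℝ}
    {w : (Fin d → ℤ) → ℝ} (hz : ∀ k, Filter.Tendsto (fun n => z n k) Filter.atTop (nhds (w k)))
    (mN : (Fin d → ℤ) × ℕ) :
    Filter.Tendsto (fun n => mterm d p q (z n) mN) Filter.atTop (nhds (mterm d p q w mN)) := by
  have hp0 : (0:ℝ) ≤ p := by linarith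
  have hsum : Filter.Tendsto (fun n => ∑ k ∈ cubeS d mN.1 mN.2, |z n k| ^ p)
      Filter.atTop (nhds (∑ k ∈ cubeS d mN.1 mN.2, |w k| ^ p)) := by
    apply tendsto_finset_sum
    intro k _
    exact ((hz k).abs.rpow_const (Or.inr hp0))
  have : Filter.Tendsto (fun n => (∑ k ∈ cubeS d mN.1 mN.2, |z n k| ^ p) ^ (1/p))
      Filter.atTop (nhds ((∑ k ∈ cubeS d mN.1 mN.2, |w k| ^ p) ^ (1/p))) := by
    apply hsum.rpow_const
    right; positivity
  exact this.const_mul _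

end MorreyAux

open MorreyAux Filter

/-- the discrete Morrey space is complete. -/
theorem morrey_complete (d : ℕ) (p q : ℝ) (hp : 1 ≤ p) (hpq : p ≤ q)
    (x : ℕ → (Fin d → ℤ) → ℝ) (hx : ∀ n, MemMorrey d p q (x n))
    (hcau : ∀ ε : ℝ, 0 < ε → ∃ M : ℕ, ∀ n₁ n₂ : ℕ, M ≤ n₁ → M ≤ n₂ →
      morreyNorm d p q (x n₁ - x n₂) < ε) :
    ∃ y : (Fin d → ℤ) → ℝ, MemMorrey d p q y ∧
      ∀ ε : ℝ, 0 < ε → ∃ M : ℕ, ∀ n : ℕ, M ≤ n → morreyNorm d p q (x n - y) < ε := by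
  -- pointwise Cauchy
  have hptc : ∀ k, CauchySeq (fun n => x n k) := by
    intro k
    rw [Metric.cauchySeq_iff]
    intro ε hε
    obtain ⟨M, hM⟩ := hcau ε hε
    refine ⟨M, fun n₁ hn₁ n₂ hn₂ => ?_⟩
    have hmem := memMorrey_sub hp (hx n₁) (hx n₂)
    calc dist (x n₁ k) (x n₂ k) = |(x n₁ - x n₂) k| := by
          simp [Real.dist_eq]
      _ ≤ morreyNorm d p q (x n₁ - x n₂) := abs_le_morreyNorm hp hmem k
      _ < ε := hM n₁ n₂ hn₁ hn₂
  have hlim : ∀ k, ∃ L : ℝ, Tendsto (fun n => x n k) atTop (nhds L) := fun k =>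
    cauchySeq_tendsto_of_complete (hptc k)
  choose y hy using hlim
  -- key estimate: for n ≥ M(ε), morreyNorm (x n - y) ≤ ε
  have key : ∀ ε : ℝ, 0 < ε → ∃ M : ℕ, ∀ n : ℕ, M ≤ n →
      (∀ mN, mterm d p q (x n - y) mN ≤ ε) := by
    intro ε hε
    obtain ⟨M, hM⟩ := hcau ε hε
    refine ⟨M, fun n hn mN => ?_⟩
    have htd : Tendsto (fun n₂ => mterm d p q (x n - x n₂) mN) atTop
        (nhds (mterm d p q (x n - y) mN)) := by
      apply mterm_tendsto hp
      intro k
      have : Tendsto (fun n₂ => x n k - x n₂ k) atTop (nhds (x n k - y k)) :=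
        tendsto_const_nhds.sub (hy k)
      simpa using this
    apply le_of_tendsto htd
    filter_upwards [eventually_ge_atTop M] with n₂ hn₂
    exact (mterm_le_morreyNorm (memMorrey_sub hp (hx n) (hx n₂)) mN).trans
      (hM n n₂ hn hn₂).le
  refine ⟨y, ?_, ?_⟩
  · -- y = x M - (x M - y) is in Morrey
    obtain ⟨M, hM⟩ := key 1 one_pos
    have h1 : MemMorrey d p q (x M - y) := by
      refine ⟨1, ?_⟩
      rintro _ ⟨mN, rfl⟩
      exact hM M le_rfl mN
    have := memMorrey_sub hp (hx M) h1
    have hxy : x M - (x M - y) = y := by ring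
    rwa [hxy] at this
  · intro ε hε
    obtain ⟨M, hM⟩ := key (ε / 2) (by linarith)
    refine ⟨M, fun n hn => ?_⟩
    have : morreyNorm d p q (x n - y) ≤ ε / 2 :=
      morreyNorm_le (by linarith) (hM n hn)
    linarith
end
end

section
/- Let 1 < p < ∞. There exists K > 0 (depending only on p and d) such that for all x : ℤ^d → ℝ and every nonnegative φ : ℤ^d → ℝ, Σ_{k ∈ ℤ^d} (Mx(k))^p φ(k) ≤ K Σ_{k ∈ ℤ^d} |x(k)|^p Mφ(k). (Discrete Fefferman–Stein inequality.) -/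
open scoped BigOperators ENNReal

noncomputable section

/-- The (centered) discrete maximal operator, valued in `[0,∞]`. -/
def maxOpE (d : ℕ) (x : (Fin d → ℤ) → ℝ) (m : Fin d → ℤ) : ℝ≥0∞ :=
  ⨆ N : ℕ, (∑ k ∈ cubeS d m N, ENNReal.ofReal |x k|) / ((2 * N + 1 : ℕ) : ℝ≥0∞) ^ d

/-- The uncentered discrete maximal operator, valued in `[0,∞]`:
the supremum over all cubes `S_{k,N}` containing `m`. -/
def umaxOpE (d : ℕ) (x : (Fin d → ℤ) → ℝ) (m : Fin d → ℤ) : ℝ≥0∞ :=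
  ⨆ s : {kN : (Fin d → ℤ) × ℕ // m ∈ cubeS d kN.1 kN.2},
    (∑ i ∈ cubeS d s.1.1 s.1.2, ENNReal.ofReal |x i|) / ((2 * s.1.2 + 1 : ℕ) : ℝ≥0∞) ^ d

/-- The "even" discrete maximal operator, valued in `[0,∞]`:
the supremum over `N ≥ 1` of averages over `R_{m,N}`. -/
def emaxOpE (d : ℕ) (x : (Fin d → ℤ) → ℝ) (m : Fin d → ℤ) : ℝ≥0∞ :=
  ⨆ N : ℕ, (∑ k ∈ cubeR d m (N + 1), ENNReal.ofReal |x k|) / ((2 * (N + 1) : ℕ) : ℝ≥0∞) ^ d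

/-- maximal op for ℝ≥0∞-valued functions -/
def Mop (d : ℕ) (g : (Fin d → ℤ) → ℝ≥0∞) (m : Fin d → ℤ) : ℝ≥0∞ :=
  ⨆ N : ℕ, (∑ k ∈ cubeS d m N, g k) / ((2 * N + 1 : ℕ) : ℝ≥0∞) ^ d

lemma maxOpE_eq_Mop (d : ℕ) (x : (Fin d → ℤ) → ℝ) :
    maxOpE d x = Mop d (fun k => ENNReal.ofReal |x k|) := rfl

lemma mem_cubeS {d : ℕ} {m k : Fin d → ℤ} {N : ℕ} :
    k ∈ cubeS d m N ↔ ∀ i, m i - N ≤ k i ∧ k i ≤ m i + N := by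
  simp only [cubeS, Finset.mem_Icc, Pi.le_def]
  constructor
  · rintro ⟨h1, h2⟩ i; exact ⟨h1 i, h2 i⟩
  · intro h; exact ⟨fun i => (h i).1, fun i => (h i).2⟩

lemma self_mem_cubeS {d : ℕ} (m : Fin d → ℤ) (N : ℕ) : m ∈ cubeS d m N := by
  rw [mem_cubeS]; intro i; omega

lemma cubeS_card {d : ℕ} (m : Fin d → ℤ) (N : ℕ) :
    (cubeS d m N).card = (2 * N + 1) ^ d := by
  classical
  rw [cubeS, Pi.card_Icc]
  have : ∀ i : Fin d, (Finset.Icc (m i - N) (m i + N)).card = 2 * N + 1 := by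
    intro i; rw [Int.card_Icc]; omega
  simp [this]

lemma cubeS_subset {d : ℕ} {m m' j : Fin d → ℤ} {N N' : ℕ}
    (hj : j ∈ cubeS d m N) (hj' : j ∈ cubeS d m' N') :
    cubeS d m N ⊆ cubeS d m' (2 * N + N') := by
  intro k hk
  rw [mem_cubeS] at *
  intro i
  have h1 := hj i; have h2 := hj' i; have h3 := hk i
  push_cast at *
  omega

lemma denom_ne_zero {d N : ℕ} : (((2 * N + 1 : ℕ) : ℝ≥0∞)) ^ d ≠ 0 := by
  apply pow_ne_zero
  simp

lemma denom_ne_top {d N : ℕ} : (((2 * N + 1 : ℕ) : ℝ≥0∞)) ^ d ≠ ⊤ := by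
  apply ENNReal.pow_ne_top
  exact ENNReal.natCast_ne_top _

/-- L6: a cube sum is bounded by volume times maximal function at the center -/
lemma sum_cubeS_le {d : ℕ} (g : (Fin d → ℤ) → ℝ≥0∞) (m : Fin d → ℤ) (N : ℕ) :
    ∑ k ∈ cubeS d m N, g k ≤ ((2 * N + 1 : ℕ) : ℝ≥0∞) ^ d * Mop d g m := by
  have h : (∑ k ∈ cubeS d m N, g k) / ((2 * N + 1 : ℕ) : ℝ≥0∞) ^ d ≤ Mop d g m :=
    le_iSup (fun N => (∑ k ∈ cubeS d m N, g k) / ((2 * N + 1 : ℕ) : ℝ≥0∞) ^ d) N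
  calc ∑ k ∈ cubeS d m N, g k
      = (∑ k ∈ cubeS d m N, g k) / ((2 * N + 1 : ℕ) : ℝ≥0∞) ^ d
        * ((2 * N + 1 : ℕ) : ℝ≥0∞) ^ d := by
        rw [ENNReal.div_mul_cancel denom_ne_zero denom_ne_top]
    _ ≤ Mop d g m * ((2 * N + 1 : ℕ) : ℝ≥0∞) ^ d := by gcongr
    _ = _ := mul_comm _ _

lemma Mop_mono {d : ℕ} {g h : (Fin d → ℤ) → ℝ≥0∞} (hle : ∀ k, g k ≤ h k) (m : Fin d → ℤ) :
    Mop d g m ≤ Mop d h m := by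
  apply iSup_mono
  intro N
  gcongr
  exact hle _

lemma Mop_le_const {d : ℕ} {g : (Fin d → ℤ) → ℝ≥0∞} {c : ℝ≥0∞} (hle : ∀ k, g k ≤ c)
    (m : Fin d → ℤ) : Mop d g m ≤ c := by
  apply iSup_le
  intro N
  have h1 : ∑ k ∈ cubeS d m N, g k ≤ ((2 * N + 1 : ℕ) : ℝ≥0∞) ^ d * c := by
    calc ∑ k ∈ cubeS d m N, g k ≤ ∑ _k ∈ cubeS d m N, c := Finset.sum_le_sum fun k _ => hle k
      _ = ((cubeS d m N).card : ℝ≥0∞) * c := by rw [Finset.sum_const, nsmul_eq_mul]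
      _ = ((2 * N + 1 : ℕ) : ℝ≥0∞) ^ d * c := by rw [cubeS_card]; push_cast; ring_nf
  rw [ENNReal.div_le_iff denom_ne_zero denom_ne_top]
  exact h1.trans_eq (mul_comm _ _)

lemma Mop_add_le {d : ℕ} (g h : (Fin d → ℤ) → ℝ≥0∞) (m : Fin d → ℤ) :
    Mop d (fun k => g k + h k) m ≤ Mop d g m + Mop d h m := by
  apply iSup_le
  intro N
  calc (∑ k ∈ cubeS d m N, (g k + h k)) / ((2 * N + 1 : ℕ) : ℝ≥0∞) ^ d
      = (∑ k ∈ cubeS d m N, g k) / ((2 * N + 1 : ℕ) : ℝ≥0∞) ^ d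
        + (∑ k ∈ cubeS d m N, h k) / ((2 * N + 1 : ℕ) : ℝ≥0∞) ^ d := by
        rw [Finset.sum_add_distrib, ENNReal.add_div]
    _ ≤ _ := add_le_add
        (le_iSup (fun N : ℕ => (∑ k ∈ cubeS d m N, g k) / ((2 * N + 1 : ℕ) : ℝ≥0∞) ^ d) N)
        (le_iSup (fun N : ℕ => (∑ k ∈ cubeS d m N, h k) / ((2 * N + 1 : ℕ) : ℝ≥0∞) ^ d) N)

lemma sum_union_le' {α : Type*} [DecidableEq α] (s t : Finset α) (f : α → ℝ≥0∞) :
    ∑ x ∈ s ∪ t, f x ≤ ∑ x ∈ s, f x + ∑ x ∈ t, f x := by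
  calc ∑ x ∈ s ∪ t, f x ≤ (∑ x ∈ s ∪ t, f x) + ∑ x ∈ s ∩ t, f x := le_self_add
    _ = ∑ x ∈ s, f x + ∑ x ∈ t, f x := Finset.sum_union_inter

lemma sum_biUnion_le' {α β : Type*} [DecidableEq β] (s : Finset α) (t : α → Finset β)
    (f : β → ℝ≥0∞) : ∑ x ∈ s.biUnion t, f x ≤ ∑ a ∈ s, ∑ x ∈ t a, f x := by
  classical
  induction s using Finset.induction with
  | empty => simp
  | insert _ _ h ih =>
    rename_i a s
    rw [Finset.biUnion_insert, Finset.sum_insert h]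
    exact (sum_union_le' _ _ f).trans (add_le_add le_rfl ih)

/-- finite Vitali covering selection -/
lemma vitali_finite (d : ℕ) (N : (Fin d → ℤ) → ℕ) (F : Finset (Fin d → ℤ)) :
    ∃ G : Finset (Fin d → ℤ), G ⊆ F ∧
      ((G : Set (Fin d → ℤ)).PairwiseDisjoint fun a => cubeS d a (N a)) ∧
      ∀ m ∈ F, ∃ m' ∈ G, ¬ Disjoint (cubeS d m (N m)) (cubeS d m' (N m')) ∧ N m ≤ N m' := by
  classical
  induction F using Finset.strongInduction with
  | _ F ih =>
    rcases F.eq_empty_or_nonempty with rfl | hne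
    · exact ⟨∅, by simp, by simp, by simp⟩
    obtain ⟨m₀, hm₀F, hmax⟩ := F.exists_max_image N hne
    set F₁ := F.filter (fun m => Disjoint (cubeS d m (N m)) (cubeS d m₀ (N m₀))) with hF₁
    have hm₀notF₁ : m₀ ∉ F₁ := by
      simp only [hF₁, Finset.mem_filter, not_and]
      intro _
      intro hdisj
      have := (hdisj le_rfl le_rfl : (cubeS d m₀ (N m₀) : Finset _) ≤ ⊥) (self_mem_cubeS m₀ (N m₀))
      simp at this
    have hF₁ss : F₁ ⊂ F := by
      refine Finset.ssubset_iff_of_subset (Finset.filter_subset _ _) |>.2 ⟨m₀, hm₀F, hm₀notF₁⟩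
    obtain ⟨G₁, hG₁sub, hG₁disj, hG₁cov⟩ := ih F₁ hF₁ss
    refine ⟨insert m₀ G₁, ?_, ?_, ?_⟩
    · intro a ha
      rcases Finset.mem_insert.1 ha with rfl | ha
      · exact hm₀F
      · exact Finset.filter_subset _ _ (hG₁sub ha)
    · intro a ha b hb hab
      simp only [Finset.coe_insert, Set.mem_insert_iff] at ha hb
      rcases ha with rfl | ha
      · rcases hb with rfl | hb
        · exact absurd rfl hab
        · have := (Finset.mem_filter.1 (hG₁sub hb)).2
          exact this.symm
      · rcases hb with rfl | hb
        · exact (Finset.mem_filter.1 (hG₁sub ha)).2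
        · exact hG₁disj ha hb hab
    · intro m hm
      by_cases hd : Disjoint (cubeS d m (N m)) (cubeS d m₀ (N m₀))
      · obtain ⟨m', hm', h1, h2⟩ := hG₁cov m (Finset.mem_filter.2 ⟨hm, hd⟩)
        exact ⟨m', Finset.mem_insert_of_mem hm', h1, h2⟩
      · exact ⟨m₀, Finset.mem_insert_self _ _, hd, hmax m hm⟩

lemma cubeS_sub_of_mem {d : ℕ} {m k₀ : Fin d → ℤ} {N' M : ℕ} (h : k₀ ∈ cubeS d m N') :
    cubeS d m M ⊆ cubeS d k₀ (M + N') := by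
  intro k hk
  rw [mem_cubeS] at *
  intro i
  have h1 := h i; have h2 := hk i
  push_cast at *
  omega

/-- weighted weak type (1,1) with constant 5^d -/
lemma weak_type (d : ℕ) (g w : (Fin d → ℤ) → ℝ≥0∞) (lam : ℝ≥0∞) (h0 : lam ≠ 0)
    (htop : lam ≠ ⊤) :
    lam * ∑' m : Fin d → ℤ, Set.indicator {m | lam < Mop d g m} w m
      ≤ 5 ^ d * ∑' k : Fin d → ℤ, g k * Mop d w k := by
  classical
  rw [ENNReal.tsum_eq_iSup_sum, ENNReal.mul_iSup]
  apply iSup_le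
  intro F
  set S := {m | lam < Mop d g m} with hS
  set F' := F.filter (· ∈ S) with hF'
  have hsum : ∑ m ∈ F, Set.indicator S w m = ∑ m ∈ F', w m := by
    rw [hF', Finset.sum_filter]
    exact Finset.sum_congr rfl fun m _ => (Set.indicator_apply S w m)
  have hF'mem : ∀ m ∈ F', lam < Mop d g m := fun m hm => (Finset.mem_filter.1 hm).2
  have hN : ∀ m ∈ F', ∃ N : ℕ,
      lam * ((2 * N + 1 : ℕ) : ℝ≥0∞) ^ d < ∑ k ∈ cubeS d m N, g k := by
    intro m hm
    have := hF'mem m hm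
    rw [Mop, lt_iSup_iff] at this
    obtain ⟨N, hlt⟩ := this
    exact ⟨N, (ENNReal.lt_div_iff_mul_lt (Or.inl denom_ne_zero) (Or.inl denom_ne_top)).1 hlt⟩
  set N : (Fin d → ℤ) → ℕ := fun m => if h : m ∈ F' then (hN m h).choose else 0 with hNdef
  have key : ∀ m ∈ F',
      lam * ((2 * N m + 1 : ℕ) : ℝ≥0∞) ^ d < ∑ k ∈ cubeS d m (N m), g k := by
    intro m hm
    simp only [hNdef, dif_pos hm]
    exact (hN m hm).choose_spec
  obtain ⟨G, hGsub, hGdisj, hGcov⟩ := vitali_finite d N F'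
  have hcover : F' ⊆ G.biUnion (fun m' => cubeS d m' (3 * N m')) := by
    intro m hm
    obtain ⟨m', hm'G, hnd, hNle⟩ := hGcov m hm
    obtain ⟨j, hj1, hj2⟩ := Finset.not_disjoint_iff.1 hnd
    refine Finset.mem_biUnion.2 ⟨m', hm'G, ?_⟩
    rw [mem_cubeS] at hj1 hj2 ⊢
    intro i
    have h1 := hj1 i; have h2 := hj2 i
    push_cast at *
    omega
  have per_cube : ∀ m' ∈ G,
      lam * ∑ k ∈ cubeS d m' (3 * N m'), w k
        ≤ 5 ^ d * ∑ k ∈ cubeS d m' (N m'), g k * Mop d w k := by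
    intro m' hm'
    obtain ⟨k₀, hk₀mem, hk₀min⟩ :=
      Finset.exists_min_image (cubeS d m' (N m')) (Mop d w) ⟨m', self_mem_cubeS m' (N m')⟩
    have hsub : cubeS d m' (3 * N m') ⊆ cubeS d k₀ (2 * (2 * N m')) := by
      have := cubeS_sub_of_mem (M := 3 * N m') hk₀mem
      have heq : 3 * N m' + N m' = 2 * (2 * N m') := by ring
      rwa [heq] at this
    have hvol : ((2 * (2 * (2 * N m')) + 1 : ℕ) : ℝ≥0∞) ^ d
        ≤ 5 ^ d * ((2 * N m' + 1 : ℕ) : ℝ≥0∞) ^ d := by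
      have hnat : (2 * (2 * (2 * N m')) + 1 : ℕ) ≤ 5 * (2 * N m' + 1) := by omega
      calc ((2 * (2 * (2 * N m')) + 1 : ℕ) : ℝ≥0∞) ^ d
          ≤ ((5 * (2 * N m' + 1) : ℕ) : ℝ≥0∞) ^ d := by
            gcongr
        _ = 5 ^ d * ((2 * N m' + 1 : ℕ) : ℝ≥0∞) ^ d := by
            push_cast
            rw [mul_pow]
    calc lam * ∑ k ∈ cubeS d m' (3 * N m'), w k
        ≤ lam * ∑ k ∈ cubeS d k₀ (2 * (2 * N m')), w k := by
          gcongr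
      _ ≤ lam * (((2 * (2 * (2 * N m')) + 1 : ℕ) : ℝ≥0∞) ^ d * Mop d w k₀) := by
          gcongr
          exact sum_cubeS_le w k₀ (2 * (2 * N m'))
      _ ≤ lam * ((5 ^ d * ((2 * N m' + 1 : ℕ) : ℝ≥0∞) ^ d) * Mop d w k₀) := by gcongr
      _ = 5 ^ d * ((lam * ((2 * N m' + 1 : ℕ) : ℝ≥0∞) ^ d) * Mop d w k₀) := by ring
      _ ≤ 5 ^ d * ((∑ k ∈ cubeS d m' (N m'), g k) * Mop d w k₀) := by
          gcongr
          exact (key m' (hGsub hm')).le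
      _ = 5 ^ d * (∑ k ∈ cubeS d m' (N m'), g k * Mop d w k₀) := by
          rw [Finset.sum_mul]
      _ ≤ 5 ^ d * ∑ k ∈ cubeS d m' (N m'), g k * Mop d w k := by
          gcongr with k hk
          exact hk₀min k hk
  calc lam * ∑ m ∈ F, Set.indicator S w m
      = lam * ∑ m ∈ F', w m := by rw [hsum]
    _ ≤ lam * ∑ m ∈ G.biUnion (fun m' => cubeS d m' (3 * N m')), w m := by
        gcongr
    _ ≤ lam * ∑ m' ∈ G, ∑ k ∈ cubeS d m' (3 * N m'), w k := by
        gcongr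
        exact sum_biUnion_le' G _ w
    _ = ∑ m' ∈ G, lam * ∑ k ∈ cubeS d m' (3 * N m'), w k := Finset.mul_sum _ _ _
    _ ≤ ∑ m' ∈ G, 5 ^ d * ∑ k ∈ cubeS d m' (N m'), g k * Mop d w k :=
        Finset.sum_le_sum per_cube
    _ = 5 ^ d * ∑ m' ∈ G, ∑ k ∈ cubeS d m' (N m'), g k * Mop d w k :=
        (Finset.mul_sum _ _ _).symm
    _ = 5 ^ d * ∑ k ∈ G.biUnion (fun m' => cubeS d m' (N m')), g k * Mop d w k := by
        rw [Finset.sum_biUnion hGdisj]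
    _ ≤ 5 ^ d * ∑' k : Fin d → ℤ, g k * Mop d w k := by
        gcongr
        exact ENNReal.sum_le_tsum _


/-- `2^r` in `ℝ≥0∞`. -/
def pw (r : ℝ) : ℝ≥0∞ := (2 : ℝ≥0∞) ^ r

lemma pw_ne_zero (r : ℝ) : pw r ≠ 0 :=
  (ENNReal.rpow_pos (by norm_num) ENNReal.ofNat_ne_top).ne'

lemma pw_ne_top (r : ℝ) : pw r ≠ ⊤ := by
  rw [pw, Ne, ENNReal.rpow_eq_top_iff]
  push_neg
  exact ⟨fun h => absurd h (by norm_num), fun h => absurd h ENNReal.ofNat_ne_top⟩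

lemma pw_add (a b : ℝ) : pw (a + b) = pw a * pw b :=
  ENNReal.rpow_add a b (by norm_num) ENNReal.ofNat_ne_top

lemma pw_one : pw 1 = 2 := ENNReal.rpow_one 2

lemma pw_lt_pw {a b : ℝ} (h : a < b) : pw a < pw b :=
  ENNReal.rpow_lt_rpow_of_exponent_lt (by norm_num) ENNReal.ofNat_ne_top h

lemma pw_le_pw {a b : ℝ} (h : a ≤ b) : pw a ≤ pw b :=
  ENNReal.rpow_le_rpow_of_exponent_le (by norm_num) h

lemma pw_inv (a : ℝ) : (pw a)⁻¹ = pw (-a) := (ENNReal.rpow_neg 2 a).symm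

lemma pw_rpow (a b : ℝ) : pw a ^ b = pw (a * b) := (ENNReal.rpow_mul 2 a b).symm

/-- dyadic localization in `ℝ≥0∞` -/
lemma exists_dyadic {c : ℝ≥0∞} (h0 : c ≠ 0) (htop : c ≠ ⊤) :
    ∃ n : ℤ, pw (n : ℝ) < c ∧ c ≤ pw ((n : ℝ) + 2) := by
  have hc : 0 < c.toReal := ENNReal.toReal_pos h0 htop
  obtain ⟨n, hn1, hn2⟩ := exists_mem_Ico_zpow hc one_lt_two
  have hofReal : ∀ m : ℤ, pw (m : ℝ) = ENNReal.ofReal ((2:ℝ) ^ m) := by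
    intro m
    rw [pw, show ((2:ℝ≥0∞)) = ENNReal.ofReal 2 by norm_num,
      ENNReal.ofReal_rpow_of_pos (by norm_num), Real.rpow_intCast]
  have hcof : c = ENNReal.ofReal c.toReal := (ENNReal.ofReal_toReal htop).symm
  refine ⟨n - 1, ?_, ?_⟩
  · rw [show ((n - 1 : ℤ) : ℝ) = ((n-1 : ℤ) : ℝ) from rfl, hofReal (n-1), hcof]
    rw [ENNReal.ofReal_lt_ofReal_iff hc]
    calc (2:ℝ) ^ (n - 1) < 2 ^ n := by
          apply zpow_lt_zpow_right₀ one_lt_two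
          omega
      _ ≤ c.toReal := hn1
  · rw [show ((n - 1 : ℤ) : ℝ) + 2 = ((n + 1 : ℤ) : ℝ) by push_cast; ring, hofReal (n+1), hcof]
    exact ENNReal.ofReal_le_ofReal hn2.le

/-- geometric series bound -/
lemma geom_le' {a : ℝ} (ha : 0 < a) (c : ℤ) :
    ∑' n : ℤ, Set.indicator {n : ℤ | n ≤ c} (fun n => pw ((n : ℝ) * a)) n
      ≤ pw ((c : ℝ) * a) * (1 - pw (-a))⁻¹ := by
  classical
  set h : ℤ → ℝ≥0∞ := Set.indicator {n : ℤ | n ≤ c} (fun n => pw ((n : ℝ) * a)) with hh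
  have hinj : Function.Injective (fun j : ℕ => c - (j : ℤ)) := by
    intro j1 j2 hj
    simpa using hj
  have hsupp : Function.support h ⊆ Set.range (fun j : ℕ => c - (j : ℤ)) := by
    intro n hn
    have hnc : n ≤ c := by
      by_contra hlt
      apply hn
      rw [hh, Set.indicator_apply, if_neg (by simpa using hlt)]
    refine ⟨(c - n).toNat, ?_⟩
    show c - ((c - n).toNat : ℤ) = n
    omega
  have := Function.Injective.tsum_eq hinj (f := h) hsupp
  rw [← this]
  have hterm : ∀ j : ℕ, h (c - (j:ℤ)) = pw ((c:ℝ) * a) * pw (-a) ^ (j:ℕ) := by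
    intro j
    have hmem : (c - (j:ℤ)) ∈ {n : ℤ | n ≤ c} := by simp
    rw [hh, Set.indicator_of_mem hmem]
    rw [show (((c - (j:ℤ)) : ℤ) : ℝ) * a = (c:ℝ) * a + (-a) * (j:ℕ) by push_cast; ring]
    rw [pw_add, ← pw_rpow (-a) (j:ℕ), ENNReal.rpow_natCast]
  calc ∑' j : ℕ, h (c - (j:ℤ)) = ∑' j : ℕ, pw ((c:ℝ) * a) * pw (-a) ^ (j:ℕ) :=
        tsum_congr hterm
    _ = pw ((c:ℝ) * a) * ∑' j : ℕ, pw (-a) ^ (j:ℕ) := ENNReal.tsum_mul_left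
    _ = pw ((c:ℝ) * a) * (1 - pw (-a))⁻¹ := by rw [ENNReal.tsum_geometric]
    _ ≤ _ := le_rfl

/-- pointwise layer-cake bound -/
lemma layer {p : ℝ} (hp : 0 < p) (f : ℝ≥0∞) :
    f ^ p ≤ pw (2 * p) *
      ∑' n : ℤ, Set.indicator {n : ℤ | pw (n : ℝ) < f} (fun n => pw ((n : ℝ) * p)) n := by
  classical
  rcases eq_or_ne f 0 with rfl | h0
  · simp [ENNReal.zero_rpow_of_pos hp]
  rcases eq_or_ne f ⊤ with rfl | htop
  · have hmem : ∀ n : ℤ, (n : ℤ) ∈ {n : ℤ | pw (n:ℝ) < ⊤} := fun n => (pw_ne_top _).lt_top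
    have : (∑' n : ℤ, Set.indicator {n : ℤ | pw (n:ℝ) < ⊤} (fun n => pw ((n:ℝ)*p)) n) = ⊤ := by
      rw [eq_top_iff]
      calc (⊤ : ℝ≥0∞) = ∑' _j : ℕ, (1:ℝ≥0∞) := (ENNReal.tsum_const_eq_top_of_ne_zero one_ne_zero).symm
        _ ≤ ∑' j : ℕ, Set.indicator {n : ℤ | pw (n:ℝ) < ⊤} (fun n => pw ((n:ℝ)*p)) ((j:ℕ) : ℤ) := by
            apply ENNReal.tsum_le_tsum
            intro j
            rw [Set.indicator_of_mem (hmem _)]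
            rw [show ((1:ℝ≥0∞)) = pw 0 by simp [pw]]
            apply pw_le_pw
            positivity
        _ ≤ _ := ENNReal.tsum_comp_le_tsum_of_injective (fun a b hab => by simpa using hab) _
    rw [this, ENNReal.mul_top (pw_ne_zero _)]
    exact le_top
  obtain ⟨n₀, hn₀1, hn₀2⟩ := exists_dyadic h0 htop
  calc f ^ p ≤ pw ((n₀:ℝ) + 2) ^ p := ENNReal.rpow_le_rpow hn₀2 hp.le
    _ = pw (2 * p + (n₀:ℝ) * p) := by rw [pw_rpow]; ring_nf
    _ = pw (2 * p) * pw ((n₀:ℝ) * p) := pw_add _ _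
    _ ≤ _ := by
        gcongr
        calc pw ((n₀:ℝ) * p)
            = Set.indicator {n : ℤ | pw (n:ℝ) < f} (fun n => pw ((n:ℝ)*p)) n₀ :=
              (Set.indicator_of_mem (s := {n : ℤ | pw (n:ℝ) < f}) hn₀1 (fun n => pw ((n:ℝ)*p))).symm
          _ ≤ _ := ENNReal.le_tsum n₀


lemma pw_lt_one {a : ℝ} (ha : a < 0) : pw a < 1 :=
  ENNReal.rpow_lt_one_of_one_lt_of_neg (by norm_num) ha

lemma levelsum {p : ℝ} (hp : 1 < p) {c : ℝ≥0∞} (hctop : c ≠ ⊤) :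
    ∑' n : ℤ, Set.indicator {n : ℤ | pw ((n:ℝ) - 1) < c} (fun n => pw ((n : ℝ) * (p-1))) n
      ≤ pw (2*(p-1)) * (1 - pw (-(p-1)))⁻¹ * c ^ (p-1) := by
  classical
  have hp1 : (0:ℝ) < p - 1 := by linarith
  rcases eq_or_ne c 0 with rfl | h0
  · have hzero : ∀ n : ℤ,
        Set.indicator {n : ℤ | pw ((n:ℝ) - 1) < 0} (fun n => pw ((n:ℝ)*(p-1))) n = 0 := by
      intro n
      apply Set.indicator_of_notMem
      simp
    rw [tsum_congr hzero]
    simp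
  obtain ⟨n₁, h1, h2⟩ := exists_dyadic h0 hctop
  have hsub : {n : ℤ | pw ((n:ℝ) - 1) < c} ⊆ {n : ℤ | n ≤ n₁ + 2} := by
    intro n hn
    simp only [Set.mem_setOf_eq] at hn ⊢
    have hlt : pw ((n:ℝ) - 1) < pw ((n₁:ℝ) + 2) := hn.trans_le h2
    have hreal : (n:ℝ) - 1 < (n₁:ℝ) + 2 := by
      by_contra hge
      push_neg at hge
      exact absurd hlt (not_lt.2 (pw_le_pw hge))
    have : (n:ℝ) < (n₁:ℝ) + 3 := by linarith
    have hint : n < n₁ + 3 := by exact_mod_cast this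
    omega
  calc ∑' n : ℤ, Set.indicator {n : ℤ | pw ((n:ℝ) - 1) < c} (fun n => pw ((n:ℝ)*(p-1))) n
      ≤ ∑' n : ℤ, Set.indicator {n : ℤ | n ≤ n₁ + 2} (fun n => pw ((n:ℝ)*(p-1))) n :=
        ENNReal.tsum_le_tsum fun n =>
          Set.indicator_le_indicator_of_subset hsub (fun _ => zero_le) n
    _ ≤ pw (((n₁ + 2 : ℤ):ℝ) * (p-1)) * (1 - pw (-(p-1)))⁻¹ := geom_le' hp1 (n₁ + 2)
    _ ≤ pw (2*(p-1)) * (1 - pw (-(p-1)))⁻¹ * c ^ (p-1) := by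
        have key : pw (((n₁ + 2 : ℤ):ℝ) * (p-1)) ≤ pw (2*(p-1)) * c ^ (p-1) := by
          have hle : pw ((n₁:ℝ) + 2) ≤ pw 2 * c := by
            rw [show (n₁:ℝ) + 2 = 2 + (n₁:ℝ) by ring, pw_add]
            exact mul_le_mul_right h1.le _
          calc pw (((n₁ + 2 : ℤ):ℝ) * (p-1))
              = pw ((n₁:ℝ) + 2) ^ (p-1) := by
                rw [pw_rpow]
                congr 1
                push_cast
                ring
            _ ≤ (pw 2 * c) ^ (p-1) := ENNReal.rpow_le_rpow hle hp1.le
            _ = pw 2 ^ (p-1) * c ^ (p-1) := ENNReal.mul_rpow_of_nonneg _ _ hp1.le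
            _ = pw (2*(p-1)) * c ^ (p-1) := by rw [pw_rpow]
        calc pw (((n₁ + 2 : ℤ):ℝ) * (p-1)) * (1 - pw (-(p-1)))⁻¹
            ≤ (pw (2*(p-1)) * c ^ (p-1)) * (1 - pw (-(p-1)))⁻¹ := mul_le_mul_left key _
          _ = pw (2*(p-1)) * (1 - pw (-(p-1)))⁻¹ * c ^ (p-1) := by ring


lemma master (d : ℕ) {p : ℝ} (hp : 1 < p) (g w : (Fin d → ℤ) → ℝ≥0∞)
    (hg : ∀ k, g k ≠ ⊤) :
    ∑' m : Fin d → ℤ, (Mop d g m) ^ p * w m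
      ≤ pw (2*p) * (2 * 5 ^ d * (pw (2*(p-1)) * (1 - pw (-(p-1)))⁻¹ *
          ∑' k : Fin d → ℤ, (g k) ^ (p-1) * g k * Mop d w k)) := by
  classical
  have hp0 : (0:ℝ) < p := lt_trans one_pos hp
  set gtr : ℤ → (Fin d → ℤ) → ℝ≥0∞ :=
    fun n k => if pw ((n:ℝ) - 1) < g k then g k else 0 with hgtr
  -- inclusion of superlevel sets after truncation
  have hTT : ∀ n : ℤ, {m | pw (n:ℝ) < Mop d g m}
      ⊆ {m | pw ((n:ℝ) - 1) < Mop d (gtr n) m} := by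
    intro n m hm
    simp only [Set.mem_setOf_eq] at hm ⊢
    by_contra hle
    push_neg at hle
    have hgle : ∀ k, g k ≤ gtr n k + pw ((n:ℝ) - 1) := by
      intro k
      by_cases hk : pw ((n:ℝ) - 1) < g k
      · simp only [hgtr, if_pos hk]
        exact le_self_add
      · simp only [hgtr, if_neg hk]
        rw [zero_add]
        exact not_lt.1 hk
    have h1 : Mop d g m ≤ Mop d (gtr n) m + pw ((n:ℝ) - 1) :=
      (Mop_mono hgle m).trans ((Mop_add_le _ _ m).trans
        (add_le_add le_rfl (Mop_le_const (fun _ => le_rfl) m)))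
    have h2 : Mop d g m ≤ pw (n:ℝ) := by
      refine h1.trans ?_
      calc Mop d (gtr n) m + pw ((n:ℝ) - 1) ≤ pw ((n:ℝ) - 1) + pw ((n:ℝ) - 1) :=
            add_le_add hle le_rfl
        _ = pw (n:ℝ) := by
            rw [← two_mul, ← pw_one, ← pw_add]
            ring_nf
    exact absurd hm (not_lt.2 h2)
  -- weak type estimate for each level
  have hweak : ∀ n : ℤ, (∑' m : Fin d → ℤ, Set.indicator {m | pw (n:ℝ) < Mop d g m} w m)
      ≤ pw (1 - (n:ℝ)) * (5 ^ d * ∑' k : Fin d → ℤ, gtr n k * Mop d w k) := by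
    intro n
    have h1 : (∑' m : Fin d → ℤ, Set.indicator {m | pw (n:ℝ) < Mop d g m} w m)
        ≤ ∑' m : Fin d → ℤ, Set.indicator {m | pw ((n:ℝ)-1) < Mop d (gtr n) m} w m :=
      ENNReal.tsum_le_tsum fun m =>
        Set.indicator_le_indicator_of_subset (hTT n) (fun _ => zero_le) m
    have h2 := weak_type d (gtr n) w (pw ((n:ℝ) - 1)) (pw_ne_zero _) (pw_ne_top _)
    refine h1.trans ?_
    have h3 : (∑' m : Fin d → ℤ, Set.indicator {m | pw ((n:ℝ)-1) < Mop d (gtr n) m} w m)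
        = (pw ((n:ℝ)-1))⁻¹ * (pw ((n:ℝ)-1) *
            ∑' m : Fin d → ℤ, Set.indicator {m | pw ((n:ℝ)-1) < Mop d (gtr n) m} w m) := by
      rw [← mul_assoc, ENNReal.inv_mul_cancel (pw_ne_zero _) (pw_ne_top _), one_mul]
    rw [h3, pw_inv, show -((n:ℝ) - 1) = 1 - (n:ℝ) by ring]
    gcongr
  -- layer cake decomposition
  have hlayer : (∑' m : Fin d → ℤ, (Mop d g m) ^ p * w m)
      ≤ pw (2*p) * ∑' n : ℤ,
          (∑' m : Fin d → ℤ, Set.indicator {m | pw (n:ℝ) < Mop d g m} w m) * pw ((n:ℝ)*p) := by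
    calc ∑' m : Fin d → ℤ, (Mop d g m) ^ p * w m
        ≤ ∑' m : Fin d → ℤ, (pw (2*p) *
            ∑' n : ℤ, Set.indicator {n : ℤ | pw (n:ℝ) < Mop d g m}
              (fun n => pw ((n:ℝ)*p)) n) * w m :=
          ENNReal.tsum_le_tsum fun m => mul_le_mul_left (layer hp0 _) _
      _ = pw (2*p) * ∑' m : Fin d → ℤ, ∑' n : ℤ,
            Set.indicator {n : ℤ | pw (n:ℝ) < Mop d g m} (fun n => pw ((n:ℝ)*p)) n * w m := by
          rw [← ENNReal.tsum_mul_left]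
          exact tsum_congr fun m => by rw [mul_assoc, ← ENNReal.tsum_mul_right]
      _ = pw (2*p) * ∑' n : ℤ, ∑' m : Fin d → ℤ,
            Set.indicator {n : ℤ | pw (n:ℝ) < Mop d g m} (fun n => pw ((n:ℝ)*p)) n * w m := by
          rw [ENNReal.tsum_comm]
      _ = pw (2*p) * ∑' n : ℤ,
            (∑' m : Fin d → ℤ, Set.indicator {m | pw (n:ℝ) < Mop d g m} w m) * pw ((n:ℝ)*p) := by
          congr 1
          refine tsum_congr fun n => ?_
          rw [← ENNReal.tsum_mul_right]
          refine tsum_congr fun m => ?_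
          by_cases hm : pw (n:ℝ) < Mop d g m
          · rw [Set.indicator_of_mem (show n ∈ {n : ℤ | pw (n:ℝ) < Mop d g m} from hm),
              Set.indicator_of_mem (show m ∈ {m | pw (n:ℝ) < Mop d g m} from hm), mul_comm]
          · rw [Set.indicator_of_notMem (show n ∉ {n : ℤ | pw (n:ℝ) < Mop d g m} from hm),
              Set.indicator_of_notMem (show m ∉ {m | pw (n:ℝ) < Mop d g m} from hm),
              zero_mul, zero_mul]
  refine hlayer.trans ?_
  refine mul_le_mul_right ?_ _
  -- now bound the n-sum
  calc ∑' n : ℤ, (∑' m : Fin d → ℤ, Set.indicator {m | pw (n:ℝ) < Mop d g m} w m) * pw ((n:ℝ)*p)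
      ≤ ∑' n : ℤ, (pw (1 - (n:ℝ)) * (5 ^ d * ∑' k : Fin d → ℤ, gtr n k * Mop d w k))
          * pw ((n:ℝ)*p) :=
        ENNReal.tsum_le_tsum fun n => mul_le_mul_left (hweak n) _
    _ = ∑' n : ℤ, 2 * 5 ^ d * (pw ((n:ℝ)*(p-1)) * ∑' k : Fin d → ℤ, gtr n k * Mop d w k) := by
        refine tsum_congr fun n => ?_
        have hpw : pw (1 - (n:ℝ)) * pw ((n:ℝ)*p) = 2 * pw ((n:ℝ)*(p-1)) := by
          rw [← pw_add, show (1 - (n:ℝ)) + (n:ℝ)*p = 1 + (n:ℝ)*(p-1) by ring, pw_add, pw_one]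
        calc (pw (1 - (n:ℝ)) * (5 ^ d * ∑' k : Fin d → ℤ, gtr n k * Mop d w k)) * pw ((n:ℝ)*p)
            = (pw (1 - (n:ℝ)) * pw ((n:ℝ)*p)) * (5 ^ d * ∑' k : Fin d → ℤ, gtr n k * Mop d w k) := by
              ring
          _ = 2 * 5 ^ d * (pw ((n:ℝ)*(p-1)) * ∑' k : Fin d → ℤ, gtr n k * Mop d w k) := by
              rw [hpw]; ring
    _ = 2 * 5 ^ d * ∑' n : ℤ, pw ((n:ℝ)*(p-1)) * ∑' k : Fin d → ℤ, gtr n k * Mop d w k :=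
        ENNReal.tsum_mul_left
    _ = 2 * 5 ^ d * ∑' n : ℤ, ∑' k : Fin d → ℤ, pw ((n:ℝ)*(p-1)) * (gtr n k * Mop d w k) := by
        congr 1
        exact tsum_congr fun n => ENNReal.tsum_mul_left.symm
    _ = 2 * 5 ^ d * ∑' k : Fin d → ℤ, ∑' n : ℤ, pw ((n:ℝ)*(p-1)) * (gtr n k * Mop d w k) := by
        rw [ENNReal.tsum_comm]
    _ = 2 * 5 ^ d * ∑' k : Fin d → ℤ,
          (∑' n : ℤ, Set.indicator {n : ℤ | pw ((n:ℝ) - 1) < g k}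
            (fun n => pw ((n:ℝ)*(p-1))) n) * (g k * Mop d w k) := by
        congr 1
        refine tsum_congr fun k => ?_
        rw [← ENNReal.tsum_mul_right]
        refine tsum_congr fun n => ?_
        by_cases hk : pw ((n:ℝ) - 1) < g k
        · rw [Set.indicator_of_mem (show n ∈ {n : ℤ | pw ((n:ℝ)-1) < g k} from hk)]
          simp only [hgtr, if_pos hk]
        · rw [Set.indicator_of_notMem (show n ∉ {n : ℤ | pw ((n:ℝ)-1) < g k} from hk)]
          simp only [hgtr, if_neg hk]
          ring
    _ ≤ 2 * 5 ^ d * ∑' k : Fin d → ℤ,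
          (pw (2*(p-1)) * (1 - pw (-(p-1)))⁻¹ * (g k) ^ (p-1)) * (g k * Mop d w k) := by
        gcongr with k
        exact levelsum hp (hg k)
    _ = 2 * 5 ^ d * (pw (2*(p-1)) * (1 - pw (-(p-1)))⁻¹ *
          ∑' k : Fin d → ℤ, (g k) ^ (p-1) * g k * Mop d w k) := by
        rw [← ENNReal.tsum_mul_left (a := pw (2*(p-1)) * (1 - pw (-(p-1)))⁻¹)]
        congr 1
        exact tsum_congr fun k => by ring


/-- discrete Fefferman–Stein inequality for the centered maximal operator. -/
theorem discrete_fefferman_stein (d : ℕ) (p : ℝ) (hp : 1 < p) :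
    ∃ K : ℝ, 0 < K ∧ ∀ (x φ : (Fin d → ℤ) → ℝ), (∀ k, 0 ≤ φ k) →
      ∑' k : Fin d → ℤ, (maxOpE d x k) ^ p * ENNReal.ofReal (φ k) ≤
        ENNReal.ofReal K * ∑' k : Fin d → ℤ, ENNReal.ofReal (|x k| ^ p) * maxOpE d φ k := by
  classical
  have hp0 : (0:ℝ) < p := lt_trans one_pos hp
  set C : ℝ≥0∞ := pw (2*p) * (2 * 5 ^ d * (pw (2*(p-1)) * (1 - pw (-(p-1)))⁻¹)) with hCdef
  have hsub1 : (1 : ℝ≥0∞) - pw (-(p-1)) ≠ 0 := by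
    have hlt : pw (-(p-1)) < 1 := pw_lt_one (by linarith)
    rw [Ne, tsub_eq_zero_iff_le]
    exact not_le.2 hlt
  have hCtop : C ≠ ⊤ := by
    apply ENNReal.mul_ne_top (pw_ne_top _)
    apply ENNReal.mul_ne_top
    · exact ENNReal.mul_ne_top ENNReal.ofNat_ne_top (ENNReal.pow_ne_top (by norm_num))
    · exact ENNReal.mul_ne_top (pw_ne_top _) (ENNReal.inv_ne_top.2 hsub1)
  refine ⟨C.toReal + 1, by positivity, ?_⟩
  intro x φ hφ
  have hmaster := master d hp (fun k => ENNReal.ofReal |x k|)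
    (fun k => ENNReal.ofReal (φ k)) (fun k => ENNReal.ofReal_ne_top)
  have hMφ : Mop d (fun k => ENNReal.ofReal (φ k)) = maxOpE d φ := by
    rw [maxOpE_eq_Mop]
    have habs : (fun k => ENNReal.ofReal (φ k)) = (fun k => ENNReal.ofReal |φ k|) := by
      funext j
      rw [abs_of_nonneg (hφ j)]
    rw [habs]
  have hR : ∀ k : Fin d → ℤ,
      (ENNReal.ofReal |x k|) ^ (p-1) * (ENNReal.ofReal |x k|)
        * Mop d (fun k => ENNReal.ofReal (φ k)) k
      = ENNReal.ofReal (|x k| ^ p) * maxOpE d φ k := by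
    intro k
    rw [hMφ]
    congr 1
    rcases eq_or_lt_of_le (abs_nonneg (x k)) with hz | hpos
    · rw [← hz]
      simp [ENNReal.zero_rpow_of_pos (by linarith : (0:ℝ) < p - 1),
        Real.zero_rpow hp0.ne']
    · rw [ENNReal.ofReal_rpow_of_pos hpos, ← ENNReal.ofReal_mul (by positivity)]
      congr 1
      have h5 : |x k| ^ (p - 1 + 1) = |x k| ^ (p-1) * |x k| ^ (1:ℝ) :=
        Real.rpow_add hpos _ _
      rw [Real.rpow_one, sub_add_cancel] at h5
      exact h5.symm
  calc ∑' k : Fin d → ℤ, (maxOpE d x k) ^ p * ENNReal.ofReal (φ k)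
      = ∑' m : Fin d → ℤ, (Mop d (fun k => ENNReal.ofReal |x k|) m) ^ p
          * ENNReal.ofReal (φ m) := by rw [maxOpE_eq_Mop]
    _ ≤ pw (2*p) * (2 * 5 ^ d * (pw (2*(p-1)) * (1 - pw (-(p-1)))⁻¹ *
          ∑' k : Fin d → ℤ, (ENNReal.ofReal |x k|) ^ (p-1) * (ENNReal.ofReal |x k|)
            * Mop d (fun k => ENNReal.ofReal (φ k)) k)) := hmaster
    _ = C * ∑' k : Fin d → ℤ, (ENNReal.ofReal |x k|) ^ (p-1) * (ENNReal.ofReal |x k|)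
            * Mop d (fun k => ENNReal.ofReal (φ k)) k := by rw [hCdef]; ring
    _ = C * ∑' k : Fin d → ℤ, ENNReal.ofReal (|x k| ^ p) * maxOpE d φ k := by
        rw [tsum_congr hR]
    _ ≤ ENNReal.ofReal (C.toReal + 1)
          * ∑' k : Fin d → ℤ, ENNReal.ofReal (|x k| ^ p) * maxOpE d φ k := by
        apply mul_le_mul_left
        conv_lhs => rw [← ENNReal.ofReal_toReal hCtop]
        exact ENNReal.ofReal_le_ofReal (by linarith)
end
end

section
/- Let 1 < p < ∞. There exists K > 0 such that for all x : ℤ^d → ℝ and nonnegative φ : ℤ^d → ℝ, Σ_{k ∈ ℤ^d} (M̂x(k))^p φ(k) ≤ K Σ_{k ∈ ℤ^d} |x(k)|^p M̂φ(k), where M̂ is the even discrete maximal operator. -/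
open scoped BigOperators ENNReal

noncomputable section

open scoped NNReal

namespace FSaux

/-- shorthand: powers of two in `ℝ≥0∞` with real exponent -/
def tp (r : ℝ) : ℝ≥0∞ := (2 : ℝ≥0∞) ^ r

lemma two_ne_top : (2 : ℝ≥0∞) ≠ ⊤ := by norm_num

lemma tp_ne_top (r : ℝ) : tp r ≠ ⊤ := by
  have h : ((2:ℝ≥0):ℝ≥0∞) ^ r = (((2:ℝ≥0) ^ r : ℝ≥0) : ℝ≥0∞) :=
    (ENNReal.coe_rpow_of_ne_zero (show (2:ℝ≥0) ≠ 0 by norm_num) r).symm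
  rw [tp, show (2:ℝ≥0∞) = ((2:ℝ≥0):ℝ≥0∞) by norm_num, h]
  exact ENNReal.coe_ne_top

lemma tp_ne_zero (r : ℝ) : tp r ≠ 0 := by
  simp [tp, ENNReal.rpow_eq_zero_iff]

lemma tp_pos (r : ℝ) : 0 < tp r := pos_iff_ne_zero.mpr (tp_ne_zero r)

lemma tp_add (r s : ℝ) : tp (r + s) = tp r * tp s :=
  ENNReal.rpow_add r s (by norm_num) two_ne_top

lemma tp_lt_tp {r s : ℝ} : tp r < tp s ↔ r < s := by
  constructor
  · intro h; by_contra hc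
    exact absurd (ENNReal.rpow_le_rpow_of_exponent_le (by norm_num) (not_lt.mp hc)) (not_le.mpr h)
  · intro h; exact ENNReal.rpow_lt_rpow_of_exponent_lt (by norm_num) two_ne_top h

lemma tp_le_tp {r s : ℝ} (h : r ≤ s) : tp r ≤ tp s :=
  ENNReal.rpow_le_rpow_of_exponent_le (by norm_num) h

lemma tp_one : tp 1 = 2 := by simp [tp]

lemma tp_zero : tp 0 = 1 := by simp [tp]

lemma tp_neg (r : ℝ) : tp (-r) = (tp r)⁻¹ := ENNReal.rpow_neg 2 r

lemma tp_lt_one {r : ℝ} (h : r < 0) : tp r < 1 := by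
  have := tp_lt_tp.mpr h; rwa [tp_zero] at this

lemma tp_nat_pow (n : ℕ) : tp (n : ℝ) = 2 ^ n := ENNReal.rpow_natCast 2 n

/-- monotone convergence for `tsum` in `ℝ≥0∞` -/
lemma tsum_iSup_mono {β : Type*} (F : ℕ → β → ℝ≥0∞) (hF : ∀ b, Monotone fun n => F n b) :
    ∑' b, ⨆ n, F n b = ⨆ n, ∑' b, F n b := by
  refine le_antisymm ?_ (iSup_le fun n => ENNReal.tsum_le_tsum fun b => le_iSup (fun n => F n b) n)
  rw [ENNReal.tsum_eq_iSup_sum]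
  refine iSup_le fun s => ?_
  rw [ENNReal.finsetSum_iSup_of_monotone (fun b => hF b)]
  exact iSup_mono fun n => ENNReal.sum_le_tsum s

lemma iSup_rpow {ι : Sort*} (f : ι → ℝ≥0∞) {q : ℝ} (hq : 0 < q) :
    (⨆ i, f i) ^ q = ⨆ i, (f i) ^ q := by
  refine Monotone.map_iSup_of_continuousAt (f := fun x : ℝ≥0∞ => x ^ q) ?_ ?_ ?_
  · exact ENNReal.continuous_rpow_const.continuousAt
  · exact fun a b hab => ENNReal.rpow_le_rpow hab hq.le
  · simpa using ENNReal.zero_rpow_of_pos hq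

lemma div_le_mul_div (x : ℝ≥0∞) {A B C : ℝ≥0∞} (hA : A ≠ 0) (hA' : A ≠ ⊤) (hB : B ≠ 0)
    (hB' : B ≠ ⊤) (hC : C ≠ 0) (hC' : C ≠ ⊤) (h : B ≤ C * A) : x / A ≤ C * (x / B) := by
  have h1 : C⁻¹ * A⁻¹ ≤ B⁻¹ := by
    rw [← ENNReal.mul_inv (Or.inl hC) (Or.inl hC')]
    exact ENNReal.inv_le_inv.mpr h
  have h2 : A⁻¹ ≤ C * B⁻¹ := by
    calc A⁻¹ = C * (C⁻¹ * A⁻¹) := by rw [← mul_assoc, ENNReal.mul_inv_cancel hC hC', one_mul]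
    _ ≤ C * B⁻¹ := mul_le_mul_right h1 C
  calc x / A = x * A⁻¹ := by rw [div_eq_mul_inv]
  _ ≤ x * (C * B⁻¹) := mul_le_mul_right h2 x
  _ = C * (x / B) := by rw [div_eq_mul_inv]; ring

lemma self_mul_rpow {a : ℝ≥0∞} {q : ℝ} (hq : 0 < q) : a * a ^ q = a ^ (1 + q) := by
  rcases eq_or_ne a 0 with rfl | h0
  · rw [ENNReal.zero_rpow_of_pos hq, ENNReal.zero_rpow_of_pos (by linarith), mul_zero]
  rcases eq_or_ne a ⊤ with rfl | htop
  · rw [ENNReal.top_rpow_of_pos hq, ENNReal.top_rpow_of_pos (by linarith), ENNReal.top_mul_top]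
  · rw [ENNReal.rpow_add 1 q h0 htop, ENNReal.rpow_one]

lemma le_inv_mul_of_mul_le {lam X Y : ℝ≥0∞} (h0 : lam ≠ 0) (htop : lam ≠ ⊤)
    (h : lam * X ≤ Y) : X ≤ lam⁻¹ * Y := by
  calc X = lam⁻¹ * (lam * X) := by rw [← mul_assoc, ENNReal.inv_mul_cancel h0 htop, one_mul]
  _ ≤ lam⁻¹ * Y := mul_le_mul_right h _

/-- geometric tail sum -/
lemma tsum_tp_le {q : ℝ} (hq : 0 < q) (i0 : ℤ) :
    ∑' i : ℤ, (if i ≤ i0 then tp ((i : ℝ) * q) else 0) ≤ tp ((i0 : ℝ) * q) * (1 - tp (-q))⁻¹ := by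
  have hinj : Function.Injective (fun n : ℕ => i0 - (n : ℤ)) := by
    intro a b h; simpa using h
  have hsupp : Function.support (fun i : ℤ => if i ≤ i0 then tp ((i : ℝ) * q) else 0) ⊆
      Set.range (fun n : ℕ => i0 - (n : ℤ)) := by
    intro i hi
    simp only [Function.mem_support, ne_eq, ite_eq_right_iff, not_forall] at hi
    obtain ⟨hle, -⟩ := hi
    refine ⟨(i0 - i).toNat, ?_⟩
    show i0 - ((i0 - i).toNat : ℤ) = i
    omega
  rw [← Function.Injective.tsum_eq hinj hsupp]
  have hval : ∀ n : ℕ, tp (((i0 - (n:ℤ) : ℤ) : ℝ) * q) = tp ((i0 : ℝ) * q) * tp (-q) ^ n := by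
    intro n
    have h1 : ((i0 - (n:ℤ) : ℤ) : ℝ) * q = (i0 : ℝ) * q + (-q) * (n : ℝ) := by push_cast; ring
    rw [h1, tp_add]
    congr 1
    rw [show tp ((-q) * (n:ℝ)) = (tp (-q)) ^ ((n:ℝ)) by rw [tp, tp, ENNReal.rpow_mul],
      ENNReal.rpow_natCast]
  refine le_of_eq ?_
  calc ∑' n : ℕ, (if i0 - (n:ℤ) ≤ i0 then tp (((i0 - (n:ℤ) : ℤ) : ℝ) * q) else 0)
      = ∑' n : ℕ, tp ((i0 : ℝ) * q) * tp (-q) ^ n := by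
        refine tsum_congr fun n => ?_
        rw [if_pos (by omega), hval n]
  _ = tp ((i0 : ℝ) * q) * ∑' n : ℕ, tp (-q) ^ n := ENNReal.tsum_mul_left
  _ = tp ((i0 : ℝ) * q) * (1 - tp (-q))⁻¹ := by rw [ENNReal.tsum_geometric]

lemma exists_pow_two (a : ℝ≥0∞) (h0 : a ≠ 0) (htop : a ≠ ⊤) :
    ∃ n : ℤ, tp (n : ℝ) ≤ a ∧ a < tp ((n : ℝ) + 1) := by
  obtain ⟨n, hn⟩ := ENNReal.exists_mem_Ico_zpow h0 htop (by norm_num : (1:ℝ≥0∞) < 2) two_ne_top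
  refine ⟨n, ?_, ?_⟩
  · rw [tp, ENNReal.rpow_intCast]; exact hn.1
  · rw [tp, show ((n:ℝ) + 1) = ((n + 1 : ℤ) : ℝ) by push_cast; ring, ENNReal.rpow_intCast]
    exact hn.2


lemma tsum_int_top {g : ℤ → ℝ≥0∞} (h : ∀ n : ℕ, (1:ℝ≥0∞) ≤ g (n : ℤ)) : ∑' i : ℤ, g i = ⊤ := by
  have h1 : (⊤ : ℝ≥0∞) ≤ ∑' n : ℕ, g (n : ℤ) := by
    calc (⊤ : ℝ≥0∞) = ∑' _ : ℕ, (1 : ℝ≥0∞) := by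
          simp [ENNReal.tsum_const_eq_top_of_ne_zero (c := (1:ℝ≥0∞)) one_ne_zero]
    _ ≤ ∑' n : ℕ, g (n : ℤ) := ENNReal.tsum_le_tsum h
  have h2 : ∑' n : ℕ, g ((n : ℤ)) ≤ ∑' i : ℤ, g i :=
    Summable.tsum_le_tsum_of_inj (fun n : ℕ => (n : ℤ)) (Nat.cast_injective : Function.Injective (Nat.cast : ℕ → ℤ))
      (fun _ _ => zero_le) (fun _ => le_rfl) ENNReal.summable ENNReal.summable
  exact top_le_iff.mp (h1.trans h2)

/-- pointwise layer-cake bound -/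
lemma rpow_le_layercake {q : ℝ} (hq : 0 < q) (b : ℝ≥0∞) :
    b ^ q ≤ tp (2 * q) * ∑' i : ℤ, (if tp (i : ℝ) < b then tp ((i : ℝ) * q) else 0) := by
  rcases eq_or_ne b 0 with rfl | hb0
  · simp [ENNReal.zero_rpow_of_pos hq]
  rcases eq_or_ne b ⊤ with rfl | hbtop
  · rw [tsum_int_top (g := fun i : ℤ => if tp (i:ℝ) < ⊤ then tp ((i:ℝ)*q) else 0) ?_]
    · rw [ENNReal.mul_top (tp_ne_zero _)]; exact le_top
    · intro n
      show (1:ℝ≥0∞) ≤ if tp (((n:ℤ):ℝ)) < ⊤ then tp (((n:ℤ):ℝ) * q) else 0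
      rw [if_pos (lt_of_le_of_ne le_top (tp_ne_top _))]
      calc (1:ℝ≥0∞) = tp 0 := tp_zero.symm
      _ ≤ tp (((n:ℤ):ℝ) * q) := tp_le_tp (by positivity)
  · obtain ⟨n, hn1, hn2⟩ := exists_pow_two b hb0 hbtop
    have key : b ^ q ≤ tp (2 * q) * tp (((n - 1 : ℤ) : ℝ) * q) := by
      calc b ^ q ≤ (tp ((n:ℝ) + 1)) ^ q := ENNReal.rpow_le_rpow hn2.le hq.le
      _ = tp (((n:ℝ) + 1) * q) := by rw [tp, tp, ← ENNReal.rpow_mul]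
      _ = tp (2 * q) * tp (((n - 1 : ℤ) : ℝ) * q) := by
          rw [← tp_add]; congr 1; push_cast; ring
    refine key.trans (mul_le_mul_right ?_ _)
    have hcond : tp ((n - 1 : ℤ) : ℝ) < b := by
      refine lt_of_lt_of_le ?_ hn1
      rw [tp_lt_tp]; push_cast; linarith
    calc tp (((n - 1 : ℤ) : ℝ) * q)
        = (if tp ((n - 1 : ℤ) : ℝ) < b then tp (((n - 1 : ℤ) : ℝ) * q) else 0) := by
          rw [if_pos hcond]
    _ ≤ ∑' i : ℤ, (if tp (i : ℝ) < b then tp ((i : ℝ) * q) else 0) :=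
        ENNReal.le_tsum (n - 1)

/-- geometric upper bound for the `f`-side sum -/
lemma tsum_cond_le {q : ℝ} (hq : 0 < q) (a : ℝ≥0∞) :
    ∑' i : ℤ, (if tp ((i : ℝ) - 1) < a then tp ((i : ℝ) * q) else 0)
      ≤ (tp (2 * q) * (1 - tp (-q))⁻¹) * a ^ q := by
  rcases eq_or_ne a 0 with rfl | ha0
  · simp
  rcases eq_or_ne a ⊤ with rfl | hatop
  · rw [ENNReal.top_rpow_of_pos hq, ENNReal.mul_top ?ne]
    · exact le_top
    case ne =>
      refine mul_ne_zero (tp_ne_zero _) ?_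
      rw [ne_eq, ENNReal.inv_eq_zero]
      exact ne_top_of_le_ne_top ENNReal.one_ne_top tsub_le_self
  · obtain ⟨n, hn1, hn2⟩ := exists_pow_two a ha0 hatop
    have step1 : ∑' i : ℤ, (if tp ((i : ℝ) - 1) < a then tp ((i : ℝ) * q) else 0)
        ≤ ∑' i : ℤ, (if i ≤ n + 1 then tp ((i : ℝ) * q) else 0) := by
      refine ENNReal.tsum_le_tsum fun i => ?_
      by_cases hc : tp ((i : ℝ) - 1) < a
      · rw [if_pos hc, if_pos ?_]
        have h1 := hc.trans hn2
        rw [tp_lt_tp] at h1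
        have h2 : (i : ℝ) < ((n + 2 : ℤ) : ℝ) := by push_cast; linarith
        have h3 : i < n + 2 := by exact_mod_cast h2
        omega
      · rw [if_neg hc]; exact zero_le
    have step2 := tsum_tp_le hq (n + 1)
    refine step1.trans (step2.trans ?_)
    have h3 : tp (((n + 1 : ℤ) : ℝ) * q) ≤ tp (2 * q) * a ^ q := by
      have heq : tp (((n + 1 : ℤ) : ℝ) * q) = tp (2 * q) * tp (((n - 1:ℤ) : ℝ) * q) := by
        rw [← tp_add]; congr 1; push_cast; ring
      rw [heq]
      refine mul_le_mul_right ?_ _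
      calc tp (((n - 1:ℤ) : ℝ) * q) ≤ tp ((n : ℝ) * q) := tp_le_tp (by push_cast; nlinarith)
      _ = (tp (n:ℝ)) ^ q := by rw [tp, tp, ← ENNReal.rpow_mul]
      _ ≤ a ^ q := ENNReal.rpow_le_rpow hn1 hq.le
    calc tp (((n + 1 : ℤ) : ℝ) * q) * (1 - tp (-q))⁻¹
        ≤ (tp (2 * q) * a ^ q) * (1 - tp (-q))⁻¹ := mul_le_mul_left h3 _
    _ = (tp (2 * q) * (1 - tp (-q))⁻¹) * a ^ q := by ring


/-! ### 1D shifted dyadic grids on ℤ -/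

lemma pow2_pos (m : ℕ) : (0:ℤ) < 2 ^ m := pow_pos two_pos m

def dyA (m : ℕ) (s c : ℤ) : ℤ := 2 ^ m * ((c - s) / 2 ^ m) + s

lemma dyA_le (m : ℕ) (s c : ℤ) : dyA m s c ≤ c ∧ c < dyA m s c + 2 ^ m := by
  have h := Int.mul_ediv_add_emod (c - s) (2 ^ m)
  have h1 := Int.emod_nonneg (c - s) (ne_of_gt (pow2_pos m))
  have h2 := Int.emod_lt_of_pos (c - s) (pow2_pos m)
  unfold dyA; omega

lemma sub_dyA (m : ℕ) (s c : ℤ) : c - dyA m s c = (c - s) % 2 ^ m := by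
  have h := Int.mul_ediv_add_emod (c - s) (2 ^ m); unfold dyA; omega

lemma grid_le_dyA (m : ℕ) (s c g : ℤ) (hdvd : (2:ℤ)^m ∣ g - s) (hle : g ≤ c) : g ≤ dyA m s c := by
  obtain ⟨u, hu⟩ := hdvd
  have h1 : u ≤ (c - s) / 2^m := by
    rw [Int.le_ediv_iff_mul_le (pow2_pos m)]
    have e2 : u * 2^m = 2^m * u := mul_comm _ _
    omega
  have h2 := mul_le_mul_of_nonneg_left h1 (le_of_lt (pow2_pos m))
  unfold dyA; omega

lemma dyA_mem_eq {m : ℕ} {s c c' : ℤ} (h1 : dyA m s c ≤ c') (h2 : c' < dyA m s c + 2 ^ m) :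
    dyA m s c' = dyA m s c := by
  have hq : (c' - s) / 2^m = (c - s) / 2^m := by
    have hd := dyA_le m s c
    have ha : ((c - s)/2^m) * 2^m ≤ c' - s := by
      have h1' : 2^m * ((c - s)/2^m) + s ≤ c' := h1
      have e2 : ((c - s)/2^m) * 2^m = 2^m * ((c - s)/2^m) := mul_comm _ _
      omega
    have hb : c' - s < ((c - s)/2^m + 1) * 2^m := by
      have h2' : c' < 2^m * ((c - s)/2^m) + s + 2^m := h2
      have e : ((c - s)/2^m + 1) * 2^m = 2^m * ((c - s)/2^m) + 2^m := by ring
      omega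
    have h3 : (c - s)/2^m ≤ (c' - s)/2^m := (Int.le_ediv_iff_mul_le (pow2_pos m)).mpr ha
    have h4 : (c' - s)/2^m < (c - s)/2^m + 1 := (Int.ediv_lt_iff_lt_mul (pow2_pos m)).mpr hb
    omega
  unfold dyA; rw [hq]

lemma dyA_sub_dvd (m : ℕ) (s c : ℤ) : (2:ℤ)^m ∣ dyA m s c - s :=
  ⟨(c - s)/2^m, by unfold dyA; ring⟩

lemma dyA_nest {m m' : ℕ} (hmm : m ≤ m') {s s' c c' : ℤ} (hdvd : (2:ℤ)^m ∣ s' - s)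
    (h : dyA m s c' = dyA m s c) : dyA m' s' c' = dyA m' s' c := by
  have hpow : (2:ℤ)^m ∣ (2:ℤ)^m' := pow_dvd_pow 2 hmm
  have htg : (2:ℤ)^m ∣ dyA m' s' c - s := by
    have h1 : (2:ℤ)^m ∣ dyA m' s' c - s' := hpow.trans (dyA_sub_dvd m' s' c)
    have h2 : dyA m' s' c - s = (dyA m' s' c - s') + (s' - s) := by ring
    rw [h2]; exact dvd_add h1 hdvd
  have hc1 := (dyA_le m' s' c).1
  have hc2 := (dyA_le m' s' c).2
  have hcc1 := (dyA_le m s c).1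
  have hcc2 := (dyA_le m s c).2
  have h5 : dyA m' s' c ≤ dyA m s c := grid_le_dyA m s c _ htg hc1
  have h6 : dyA m s c + 2^m ≤ dyA m' s' c + 2^m' := by
    have hdvd2 : (2:ℤ)^m ∣ (dyA m' s' c + 2^m' - dyA m s c) := by
      have hg := dyA_sub_dvd m s c
      have e : dyA m' s' c + 2^m' - dyA m s c
          = (dyA m' s' c - s) - (dyA m s c - s) + 2^m' := by ring
      rw [e]; exact dvd_add (dvd_sub htg hg) hpow
    have hpos : dyA m s c < dyA m' s' c + 2^m' := lt_of_le_of_lt hcc1 hc2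
    obtain ⟨u, hu⟩ := hdvd2
    have hu1 : 1 ≤ u := by nlinarith [pow2_pos m]
    nlinarith [pow2_pos m]
  have hmemc' := dyA_le m s c'
  refine dyA_mem_eq ?_ ?_
  · calc dyA m' s' c ≤ dyA m s c := h5
    _ = dyA m s c' := h.symm
    _ ≤ c' := (dyA_le m s c').1
  · calc c' < dyA m s c' + 2^m := (dyA_le m s c').2
    _ = dyA m s c + 2^m := by rw [h]
    _ ≤ dyA m' s' c + 2^m' := h6

/-! ### the one-third-trick shift sequence -/

def sh : ℕ → ℤ
  | 0 => 0
  | m + 1 => sh m + (if Even m then 2 ^ m else 0)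

lemma sh_zero : sh 0 = 0 := rfl

lemma sh_succ (m : ℕ) : sh (m+1) = sh m + (if Even m then 2 ^ m else 0) := rfl

lemma sh_nonneg (m : ℕ) : 0 ≤ sh m := by
  induction m with
  | zero => rw [sh_zero]
  | succ m ih =>
    rw [sh_succ]
    have := pow2_pos m
    split <;> omega

lemma three_mul_sh (m : ℕ) : 3 * sh m = if Even m then 2^m - 1 else 2^(m+1) - 1 := by
  induction m with
  | zero => rw [sh_zero]; norm_num
  | succ m ih =>
    rw [sh_succ]
    rcases Nat.even_or_odd m with he | ho
    · rw [if_pos he] at ih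
      have hno : ¬ Even (m+1) := by simp [Nat.even_add_one, he]
      rw [if_pos he, if_neg hno]
      have h4 : (2:ℤ)^(m+1+1) = 4 * 2^m := by ring
      have h2 : (2:ℤ)^(m+1) = 2 * 2^m := by ring
      omega
    · have ho' : ¬ Even m := fun hEv => (Nat.not_odd_iff_even.mpr hEv) ho
      rw [if_neg ho'] at ih
      rw [if_neg ho', if_pos (Nat.even_add_one.mpr ho')]
      omega

lemma sh_dvd {m n : ℕ} (h : m ≤ n) : (2:ℤ)^m ∣ sh n - sh m := by
  induction n with
  | zero =>
    have hm : m = 0 := Nat.le_zero.mp h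
    subst hm; rw [sub_self]; exact dvd_zero _
  | succ n ih =>
    rcases Nat.lt_or_ge m (n+1) with hlt | hge
    · have hmn : m ≤ n := by omega
      have h1 := ih hmn
      have h2 : (2:ℤ)^m ∣ (if Even n then (2:ℤ)^n else 0) := by
        split
        · exact pow_dvd_pow 2 hmn
        · exact dvd_zero _
      have e : sh (n+1) - sh m = (sh n - sh m) + (if Even n then (2:ℤ)^n else 0) := by
        rw [sh_succ]; ring
      rw [e]; exact dvd_add h1 h2
    · have : m = n + 1 := by omega
      subst this; rw [sub_self]; exact dvd_zero _

lemma sh_bounds {m : ℕ} (hm : 2 ≤ m) :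
    2^m ≤ 4 * sh m ∧ 4 * sh m ≤ 3 * 2^m ∧ sh m < (2:ℤ)^m := by
  have h3 := three_mul_sh m
  have hp : (4:ℤ) ≤ 2^m := by
    calc (4:ℤ) = 2^2 := by norm_num
    _ ≤ 2^m := pow_le_pow_right₀ (by norm_num) hm
  rcases Nat.even_or_odd m with he | ho
  · rw [if_pos he] at h3
    omega
  · have ho' : ¬ Even m := fun hEv => (Nat.not_odd_iff_even.mpr hEv) ho
    rw [if_neg ho'] at h3
    have h4 : (2:ℤ)^(m+1) = 2 * 2^m := by ring
    omega

/-- the two-grid lemma: one of the grids `0`, `sh m` keeps `c` at distance `≥ M` from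
its scale-`m` boundaries. -/
lemma two_grid {m : ℕ} {M c : ℤ} (hM : 0 < M) (h16 : 16 * M ≤ 2 ^ m) :
    ∃ s : ℤ, (s = 0 ∨ s = sh m) ∧ M ≤ (c - s) % 2 ^ m ∧ (c - s) % 2 ^ m ≤ 2 ^ m - M := by
  have hm2 : 2 ≤ m := by
    by_contra hc
    interval_cases m <;> omega
  obtain ⟨hb1, hb2, hb3⟩ := sh_bounds hm2
  have h0 := sh_nonneg m
  have hP := pow2_pos m
  have hr0a := Int.emod_nonneg c (ne_of_gt hP)
  have hr0b := Int.emod_lt_of_pos c hP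
  by_cases hcase : M ≤ c % 2^m ∧ c % 2^m ≤ 2^m - M
  · exact ⟨0, Or.inl rfl, by simpa using hcase⟩
  · refine ⟨sh m, Or.inr rfl, ?_⟩
    have key : (c - sh m) % 2^m = (c % 2^m - sh m) % 2^m := by
      rw [Int.sub_emod c (sh m), Int.sub_emod (c % 2^m) (sh m),
        Int.emod_emod_of_dvd c (dvd_refl ((2:ℤ)^m))]
    rcases le_or_gt (sh m) (c % 2^m) with hge | hlt
    · have : (c % 2^m - sh m) % 2^m = c % 2^m - sh m :=
        Int.emod_eq_of_lt (by omega) (by omega)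
      rw [key, this]
      omega
    · have e1 : (c % 2^m - sh m + 2^m) % 2^m = (c % 2^m - sh m) % 2^m := by
        have h := Int.add_mul_emod_self_left (c % 2^m - sh m) (2^m) 1
        simpa using h
      have e2 : (c % 2^m - sh m + 2^m) % 2^m = c % 2^m - sh m + 2^m :=
        Int.emod_eq_of_lt (by omega) (by omega)
      rw [key, ← e1, e2]
      omega

/-! ### dyadic cubes in ℤ^d -/

variable {d : ℕ}

def shv (α : Fin d → Bool) (i : Fin d) (m : ℕ) : ℤ := if α i then sh m else 0

lemma shv_dvd (α : Fin d → Bool) (i : Fin d) {m n : ℕ} (h : m ≤ n) :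
    (2:ℤ)^m ∣ shv α i n - shv α i m := by
  rcases Bool.eq_false_or_eq_true (α i) with h' | h' <;> simp [shv, h', sh_dvd h]

def dyQ (α : Fin d → Bool) (m : ℕ) (k : Fin d → ℤ) : Finset (Fin d → ℤ) :=
  Finset.Icc (fun i => dyA m (shv α i m) (k i)) (fun i => dyA m (shv α i m) (k i) + 2^m - 1)

lemma mem_dyQ {α : Fin d → Bool} {m : ℕ} {k j : Fin d → ℤ} : j ∈ dyQ α m k ↔
    ∀ i, dyA m (shv α i m) (k i) ≤ j i ∧ j i ≤ dyA m (shv α i m) (k i) + 2^m - 1 := by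
  simp only [dyQ, Finset.mem_Icc, Pi.le_def]
  exact ⟨fun h i => ⟨h.1 i, h.2 i⟩, fun h => ⟨fun i => (h i).1, fun i => (h i).2⟩⟩

lemma mem_dyQ_iff_dyA {α : Fin d → Bool} {m : ℕ} {k j : Fin d → ℤ} : j ∈ dyQ α m k ↔
    ∀ i, dyA m (shv α i m) (j i) = dyA m (shv α i m) (k i) := by
  rw [mem_dyQ]
  constructor
  · intro h i
    exact dyA_mem_eq (h i).1 (by have := (h i).2; omega)
  · intro h i
    have h1 := dyA_le m (shv α i m) (j i)
    rw [h i] at h1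
    omega

lemma self_mem_dyQ (α : Fin d → Bool) (m : ℕ) (k : Fin d → ℤ) : k ∈ dyQ α m k := by
  rw [mem_dyQ]
  intro i
  have := dyA_le m (shv α i m) (k i)
  omega

lemma dyQ_eq_of_mem {α : Fin d → Bool} {m : ℕ} {k j : Fin d → ℤ} (h : j ∈ dyQ α m k) :
    dyQ α m j = dyQ α m k := by
  have h' := mem_dyQ_iff_dyA.mp h
  unfold dyQ
  congr 1 <;> funext i <;> rw [h' i]

lemma dyQ_nest {α : Fin d → Bool} {m m' : ℕ} (hmm : m ≤ m') {k j : Fin d → ℤ}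
    (h : j ∈ dyQ α m k) : dyQ α m' j = dyQ α m' k := by
  have h' := mem_dyQ_iff_dyA.mp h
  have key : ∀ i, dyA m' (shv α i m') (j i) = dyA m' (shv α i m') (k i) := fun i =>
    dyA_nest hmm (shv_dvd α i hmm) (h' i)
  unfold dyQ
  congr 1 <;> funext i <;> rw [key i]

lemma card_dyQ (α : Fin d → Bool) (m : ℕ) (k : Fin d → ℤ) :
    (dyQ α m k).card = 2^(m*d) := by
  rw [dyQ, Pi.card_Icc]
  have h1 : ∀ i : Fin d,
      (Finset.Icc (dyA m (shv α i m) (k i)) (dyA m (shv α i m) (k i) + 2^m - 1)).card = 2^m := by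
    intro i
    rw [Int.card_Icc]
    have e : (dyA m (shv α i m) (k i) + 2^m - 1 + 1 - dyA m (shv α i m) (k i)) = (2:ℤ)^m := by
      ring
    rw [e, show (2:ℤ)^m = ((2^m : ℕ) : ℤ) by push_cast; ring, Int.toNat_natCast]
  rw [Finset.prod_congr rfl (fun i _ => h1 i), Finset.prod_const, Finset.card_univ,
    Fintype.card_fin, ← pow_mul]

lemma dyQ_subset_cubeS (α : Fin d → Bool) (m : ℕ) (k : Fin d → ℤ) :
    dyQ α m k ⊆ cubeS d k (2^m - 1) := by
  intro j hj
  have hjm := mem_dyQ.mp hj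
  have hkm := mem_dyQ.mp (self_mem_dyQ α m k)
  rw [cubeS, Finset.mem_Icc]
  have h1 : (1:ℕ) ≤ 2^m := Nat.one_le_two_pow
  have hcast : ((2^m - 1 : ℕ) : ℤ) = 2^m - 1 := by push_cast [h1]; ring
  constructor <;> intro i <;>
    · have ha := (hjm i).1
      have hb := (hjm i).2
      have hc := (hkm i).1
      have hd := (hkm i).2
      simp only [hcast]
      omega

lemma cubeR_subset_cubeS (k : Fin d → ℤ) (N : ℕ) : cubeR d k N ⊆ cubeS d k N := by
  intro j hj
  rw [cubeR, Finset.mem_Ico] at hj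
  rw [cubeS, Finset.mem_Icc]
  exact ⟨hj.1, le_of_lt hj.2⟩

lemma cubeS_subset_cubeR (hd : 0 < d) (k : Fin d → ℤ) (N : ℕ) :
    cubeS d k N ⊆ cubeR d k (N+1) := by
  intro j hj
  rw [cubeS, Finset.mem_Icc] at hj
  rw [cubeR, Finset.mem_Ico]
  obtain ⟨h1, h2⟩ := hj
  constructor
  · intro i
    have := h1 i
    push_cast at this ⊢
    omega
  · refine lt_of_le_of_lt h2 ?_
    rw [Pi.lt_def]
    constructor
    · intro i; push_cast; omega
    · exact ⟨⟨0, hd⟩, by push_cast; omega⟩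

lemma mem_cubeS_abs {k j : Fin d → ℤ} {N : ℕ} :
    j ∈ cubeS d k N ↔ ∀ i, k i - N ≤ j i ∧ j i ≤ k i + N := by
  simp only [cubeS, Finset.mem_Icc, Pi.le_def]
  exact ⟨fun h i => ⟨h.1 i, h.2 i⟩, fun h => ⟨fun i => (h i).1, fun i => (h i).2⟩⟩


/-! ### ENNReal averages and maximal functions -/

def emaxE (d : ℕ) (f : (Fin d → ℤ) → ℝ≥0∞) (k : Fin d → ℤ) : ℝ≥0∞ :=
  ⨆ N : ℕ, (∑ j ∈ cubeR d k (N+1), f j) / ((2 * (N + 1) : ℕ) : ℝ≥0∞) ^ d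

def dyAvg (α : Fin d → Bool) (m : ℕ) (f : (Fin d → ℤ) → ℝ≥0∞) (k : Fin d → ℤ) : ℝ≥0∞ :=
  (∑ j ∈ dyQ α m k, f j) / 2 ^ (m * d)

def dyM (α : Fin d → Bool) (n : ℕ) (f : (Fin d → ℤ) → ℝ≥0∞) (k : Fin d → ℤ) : ℝ≥0∞ :=
  ⨆ m ∈ Finset.range (n+1), dyAvg α m f k

lemma pow2E_ne_zero (t : ℕ) : ((2:ℝ≥0∞)) ^ t ≠ 0 := pow_ne_zero t (by norm_num)
lemma pow2E_ne_top (t : ℕ) : ((2:ℝ≥0∞)) ^ t ≠ ⊤ := ENNReal.pow_ne_top (by norm_num)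

lemma mul_div_cancel_left' {A c : ℝ≥0∞} (h0 : A ≠ 0) (htop : A ≠ ⊤) : (A * c) / A = c := by
  rw [div_eq_mul_inv, mul_comm A c, mul_assoc, ENNReal.mul_inv_cancel h0 htop, mul_one]

lemma den_ne_zero (N : ℕ) : (((2 * (N + 1) : ℕ) : ℝ≥0∞)) ^ d ≠ 0 :=
  pow_ne_zero d (by simp)

lemma den_ne_top (N : ℕ) : (((2 * (N + 1) : ℕ) : ℝ≥0∞)) ^ d ≠ ⊤ :=
  ENNReal.pow_ne_top (ENNReal.natCast_ne_top _)

lemma dyAvg_le_emaxE (hd : 0 < d) (α : Fin d → Bool) (m : ℕ) (ψ : (Fin d → ℤ) → ℝ≥0∞)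
    (j : Fin d → ℤ) : dyAvg α m ψ j ≤ 2^d * emaxE d ψ j := by
  set N : ℕ := 2^m - 1 with hN
  have hN1 : N + 1 = 2^m := by
    have := Nat.one_le_two_pow (n := m); omega
  have hsub : dyQ α m j ⊆ cubeR d j (N+1) := fun x hx =>
    cubeS_subset_cubeR hd j N (dyQ_subset_cubeS α m j hx)
  have hterm : (∑ x ∈ cubeR d j (N+1), ψ x) / ((2*(N+1):ℕ):ℝ≥0∞)^d ≤ emaxE d ψ j :=
    le_iSup (fun N' => (∑ x ∈ cubeR d j (N'+1), ψ x) / ((2*(N'+1):ℕ):ℝ≥0∞)^d) N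
  have hsum : ∑ x ∈ dyQ α m j, ψ x ≤ ∑ x ∈ cubeR d j (N+1), ψ x :=
    Finset.sum_le_sum_of_subset hsub
  have hBCA : (((2*(N+1):ℕ)):ℝ≥0∞)^d ≤ (2:ℝ≥0∞)^d * 2^(m*d) := by
    refine le_of_eq ?_
    rw [hN1]
    push_cast
    rw [mul_pow, ← pow_mul]
  calc dyAvg α m ψ j ≤ (∑ x ∈ cubeR d j (N+1), ψ x) / 2^(m*d) :=
        ENNReal.div_le_div_right hsum _
  _ ≤ (2:ℝ≥0∞)^d * ((∑ x ∈ cubeR d j (N+1), ψ x) / ((2*(N+1):ℕ):ℝ≥0∞)^d) :=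
        div_le_mul_div _ (pow2E_ne_zero _) (pow2E_ne_top _) (den_ne_zero N) (den_ne_top N)
          (pow2E_ne_zero _) (pow2E_ne_top _) hBCA
  _ ≤ 2^d * emaxE d ψ j := mul_le_mul_right hterm _

lemma emaxE_le_dyM (hd : 0 < d) (f : (Fin d → ℤ) → ℝ≥0∞) (k : Fin d → ℤ) :
    emaxE d f k ≤ 2^(5*d) * ⨆ α : Fin d → Bool, ⨆ m : ℕ, dyAvg α m f k := by
  refine iSup_le fun N => ?_
  set m := Nat.clog 2 (16*(N+2)) with hm
  have h1 : 16*(N+2) ≤ 2^m := Nat.le_pow_clog one_lt_two _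
  have hm1 : m ≠ 0 := by
    intro h0
    rw [h0, pow_zero] at h1
    omega
  have h2 : 2^m ≤ 32*(N+2) := by
    have h3 := Nat.pow_pred_clog_lt_self (b := 2) one_lt_two (x := 16*(N+2)) (by omega)
    simp only [Nat.pred_eq_sub_one] at h3
    rw [← hm] at h3
    have e : 2^m = 2 * 2^(m-1) := by
      conv_lhs => rw [show m = (m-1)+1 by omega]
      rw [pow_succ]; ring
    omega
  have hTG : ∀ i : Fin d, ∃ s : ℤ, (s = 0 ∨ s = sh m) ∧
      ((N:ℤ)+2) ≤ (k i - s) % 2^m ∧ (k i - s) % 2^m ≤ 2^m - ((N:ℤ)+2) := by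
    intro i
    refine two_grid (by positivity) ?_
    have : ((16*(N+2) : ℕ) : ℤ) ≤ (((2:ℕ)^m : ℕ) : ℤ) := Int.ofNat_le.mpr h1
    push_cast at this
    linarith
  choose s hs hs1 hs2 using hTG
  classical
  set α : Fin d → Bool := fun i => if s i = sh m then true else false with hα
  have hshv : ∀ i, shv α i m = s i := by
    intro i
    by_cases hcase : s i = sh m
    · simp [shv, α, hcase]
    · have h0 : s i = 0 := (hs i).resolve_right hcase
      have hfalse : α i = false := by simp [α, hcase]
      simp [shv, hfalse, h0]
  have hsubset : cubeR d k (N+1) ⊆ dyQ α m k := by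
    intro j hj
    have hj' := mem_cubeS_abs.mp (cubeR_subset_cubeS k (N+1) hj)
    rw [mem_dyQ]
    intro i
    rw [hshv i]
    have hsubA := sub_dyA m (s i) (k i)
    have b1 := hs1 i
    have b2 := hs2 i
    have hji := hj' i
    have hcast : ((N+1:ℕ):ℤ) = (N:ℤ)+1 := by push_cast; ring
    rw [hcast] at hji
    omega
  have hsum : ∑ j ∈ cubeR d k (N+1), f j ≤ ∑ j ∈ dyQ α m k, f j :=
    Finset.sum_le_sum_of_subset hsubset
  have hBCA : ((2:ℝ≥0∞))^(m*d) ≤ (2:ℝ≥0∞)^(5*d) * ((2*(N+1):ℕ):ℝ≥0∞)^d := by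
    have hb : (2:ℕ)^m ≤ 2^5 * (2*(N+1)) := by
      have h5 : (2:ℕ)^5 = 32 := by norm_num
      omega
    have hnat : (2:ℕ)^(m*d) ≤ 2^(5*d) * (2*(N+1))^d := by
      calc (2:ℕ)^(m*d) = (2^m)^d := pow_mul 2 m d
      _ ≤ (2^5 * (2*(N+1)))^d := Nat.pow_le_pow_left hb d
      _ = 2^(5*d) * (2*(N+1))^d := by rw [mul_pow, ← pow_mul]
    calc ((2:ℝ≥0∞))^(m*d) = ((2^(m*d) : ℕ) : ℝ≥0∞) := by push_cast; ring
    _ ≤ ((2^(5*d) * (2*(N+1))^d : ℕ) : ℝ≥0∞) := Nat.cast_le.mpr hnat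
    _ = (2:ℝ≥0∞)^(5*d) * ((2*(N+1):ℕ):ℝ≥0∞)^d := by push_cast; ring
  calc (∑ j ∈ cubeR d k (N+1), f j) / ((2*(N+1):ℕ):ℝ≥0∞)^d
      ≤ (∑ j ∈ dyQ α m k, f j) / ((2*(N+1):ℕ):ℝ≥0∞)^d := ENNReal.div_le_div_right hsum _
  _ ≤ (2:ℝ≥0∞)^(5*d) * ((∑ j ∈ dyQ α m k, f j) / 2^(m*d)) :=
      div_le_mul_div _ (den_ne_zero N) (den_ne_top N) (pow2E_ne_zero _) (pow2E_ne_top _)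
        (pow2E_ne_zero _) (pow2E_ne_top _) hBCA
  _ = (2:ℝ≥0∞)^(5*d) * dyAvg α m f k := rfl
  _ ≤ 2^(5*d) * ⨆ α' : Fin d → Bool, ⨆ m' : ℕ, dyAvg α' m' f k :=
      mul_le_mul_right (le_trans (le_iSup (fun m' => dyAvg α m' f k) m)
        (le_iSup (fun α' => ⨆ m' : ℕ, dyAvg α' m' f k) α)) _

lemma dyM_add_const {α : Fin d → Bool} {n : ℕ} {f g : (Fin d → ℤ) → ℝ≥0∞} {c : ℝ≥0∞}
    (h : ∀ j, f j ≤ g j + c) (k : Fin d → ℤ) : dyM α n f k ≤ dyM α n g k + c := by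
  refine iSup₂_le fun m hm => ?_
  have havg : dyAvg α m f k ≤ dyAvg α m g k + c := by
    have hsum : ∑ j ∈ dyQ α m k, f j ≤ (∑ j ∈ dyQ α m k, g j) + 2^(m*d) * c := by
      calc ∑ j ∈ dyQ α m k, f j ≤ ∑ j ∈ dyQ α m k, (g j + c) :=
            Finset.sum_le_sum (fun j _ => h j)
      _ = (∑ j ∈ dyQ α m k, g j) + (dyQ α m k).card • c := by
            rw [Finset.sum_add_distrib, Finset.sum_const]
      _ = (∑ j ∈ dyQ α m k, g j) + 2^(m*d) * c := by
            rw [card_dyQ, nsmul_eq_mul]; push_cast; ring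
    calc dyAvg α m f k ≤ ((∑ j ∈ dyQ α m k, g j) + 2^(m*d) * c) / 2^(m*d) :=
          ENNReal.div_le_div_right hsum _
    _ = dyAvg α m g k + (2^(m*d) * c) / 2^(m*d) := ENNReal.add_div
    _ = dyAvg α m g k + c := by rw [mul_div_cancel_left' (pow2E_ne_zero _) (pow2E_ne_top _)]
  exact le_trans havg (add_le_add (le_iSup₂ (f := fun m (_ : m ∈ Finset.range (n+1)) =>
    dyAvg α m g k) m hm) le_rfl)

lemma lt_dyM_iff {α : Fin d → Bool} {n : ℕ} {f : (Fin d → ℤ) → ℝ≥0∞} {k : Fin d → ℤ}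
    {lam : ℝ≥0∞} : lam < dyM α n f k ↔ ∃ m, m ≤ n ∧ lam < dyAvg α m f k := by
  rw [dyM]
  simp only [lt_iSup_iff, Finset.mem_range, Nat.lt_succ_iff]
  constructor
  · rintro ⟨m, hm, h⟩; exact ⟨m, hm, h⟩
  · rintro ⟨m, hm, h⟩; exact ⟨m, hm, h⟩


/-! ### the weak-type Fefferman–Stein estimate for the truncated dyadic maximal operator -/

lemma weak (hd : 0 < d) (α : Fin d → Bool) (f ψ : (Fin d → ℤ) → ℝ≥0∞) (n : ℕ) (lam : ℝ≥0∞) :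
    lam * ∑' k : Fin d → ℤ, (if lam < dyM α n f k then ψ k else 0)
      ≤ 2^d * ∑' j : Fin d → ℤ, f j * emaxE d ψ j := by
  classical
  set E : (Fin d → ℤ) → Prop := fun k => lam < dyM α n f k with hE
  set Mk : (Fin d → ℤ) → ℕ := fun k => Nat.findGreatest (fun m => lam < dyAvg α m f k) n with hMk
  have hMk_le : ∀ k, Mk k ≤ n := fun k => Nat.findGreatest_le n
  have hMk_spec : ∀ k, E k → lam < dyAvg α (Mk k) f k := by
    intro k hk
    obtain ⟨m, hm, hlt⟩ := lt_dyM_iff.mp hk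
    exact Nat.findGreatest_spec (P := fun m => lam < dyAvg α m f k) hm hlt
  have key : ∀ k j, E k → j ∈ dyQ α (Mk k) k →
      E j ∧ Mk j = Mk k ∧ dyQ α (Mk j) j = dyQ α (Mk k) k := by
    intro k j hk hj
    have hQ1 : dyQ α (Mk k) j = dyQ α (Mk k) k := dyQ_eq_of_mem hj
    have havg1 : dyAvg α (Mk k) f j = dyAvg α (Mk k) f k := by unfold dyAvg; rw [hQ1]
    have hPj : lam < dyAvg α (Mk k) f j := by rw [havg1]; exact hMk_spec k hk
    have hEj : E j := lt_dyM_iff.mpr ⟨Mk k, hMk_le k, hPj⟩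
    have hge : Mk k ≤ Mk j := Nat.le_findGreatest (hMk_le k) hPj
    have hQ2 : dyQ α (Mk j) j = dyQ α (Mk j) k := dyQ_nest hge hj
    have havg2 : dyAvg α (Mk j) f k = dyAvg α (Mk j) f j := by unfold dyAvg; rw [hQ2]
    have hPk : lam < dyAvg α (Mk j) f k := by rw [havg2]; exact hMk_spec j hEj
    have heq : Mk j = Mk k := le_antisymm (Nat.le_findGreatest (hMk_le j) hPk) hge
    exact ⟨hEj, heq, by rw [heq]; exact hQ1⟩
  set G : (Fin d → ℤ) → (Fin d → ℤ) → ℝ≥0∞ := fun k j =>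
    if (E k ∧ j ∈ dyQ α (Mk k) k) then f j * (ψ k / 2 ^ (Mk k * d)) else 0 with hG
  have step1 : lam * ∑' k : Fin d → ℤ, (if E k then ψ k else 0) ≤ ∑' k, ∑' j, G k j := by
    rw [← ENNReal.tsum_mul_left]
    refine ENNReal.tsum_le_tsum fun k => ?_
    by_cases hk : E k
    · rw [if_pos hk]
      have h1 : lam * ψ k ≤ dyAvg α (Mk k) f k * ψ k :=
        mul_le_mul_left (le_of_lt (hMk_spec k hk)) _
      refine h1.trans (le_of_eq ?_)
      have h2 : dyAvg α (Mk k) f k * ψ k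
          = ∑ j ∈ dyQ α (Mk k) k, f j * (ψ k / 2 ^ (Mk k * d)) := by
        rw [dyAvg, div_eq_mul_inv, mul_assoc, mul_comm ((2:ℝ≥0∞) ^ (Mk k * d))⁻¹ (ψ k),
          ← div_eq_mul_inv, Finset.sum_mul]
      have h3 : ∑' j, G k j = ∑ j ∈ dyQ α (Mk k) k, f j * (ψ k / 2 ^ (Mk k * d)) := by
        rw [tsum_eq_sum (s := dyQ α (Mk k) k) (fun j hj => if_neg (fun hc => hj hc.2))]
        exact Finset.sum_congr rfl (fun j hj => if_pos ⟨hk, hj⟩)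
      rw [h2, h3]
    · rw [if_neg hk, mul_zero]
      exact zero_le
  have step3 : ∀ j, ∑' k, G k j ≤ f j * (2^d * emaxE d ψ j) := by
    intro j
    have hfact : ∀ k, G k j
        = f j * (if (E k ∧ j ∈ dyQ α (Mk k) k) then ψ k / 2 ^ (Mk k * d) else 0) := by
      intro k
      by_cases hc : E k ∧ j ∈ dyQ α (Mk k) k
      · simp only [hG]
        rw [if_pos hc, if_pos hc]
      · simp only [hG]
        rw [if_neg hc, if_neg hc, mul_zero]
    rw [tsum_congr hfact, ENNReal.tsum_mul_left]
    refine mul_le_mul_right ?_ _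
    by_cases hEj : E j
    · have hpoint : ∀ k, (if (E k ∧ j ∈ dyQ α (Mk k) k) then ψ k / 2 ^ (Mk k * d) else 0)
          ≤ (if k ∈ dyQ α (Mk j) j then ψ k / 2 ^ (Mk j * d) else 0) := by
        intro k
        by_cases hc : E k ∧ j ∈ dyQ α (Mk k) k
        · obtain ⟨hEk, hjQ⟩ := hc
          obtain ⟨-, hMeq, hQeq⟩ := key k j hEk hjQ
          rw [if_pos ⟨hEk, hjQ⟩, if_pos ?mem, hMeq]
          case mem =>
            rw [hQeq]
            exact self_mem_dyQ α (Mk k) k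
        · rw [if_neg hc]
          exact zero_le
      refine (ENNReal.tsum_le_tsum hpoint).trans ?_
      rw [tsum_eq_sum (s := dyQ α (Mk j) j) (fun k hk => if_neg hk)]
      have hsum : ∑ k ∈ dyQ α (Mk j) j, (if k ∈ dyQ α (Mk j) j then ψ k / 2 ^ (Mk j * d) else 0)
          = (∑ k ∈ dyQ α (Mk j) j, ψ k) / 2 ^ (Mk j * d) := by
        rw [Finset.sum_congr rfl (fun k hk => if_pos hk)]
        calc ∑ k ∈ dyQ α (Mk j) j, ψ k / 2 ^ (Mk j * d)
            = ∑ k ∈ dyQ α (Mk j) j, ψ k * ((2:ℝ≥0∞) ^ (Mk j * d))⁻¹ := by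
              simp [div_eq_mul_inv]
        _ = (∑ k ∈ dyQ α (Mk j) j, ψ k) * ((2:ℝ≥0∞) ^ (Mk j * d))⁻¹ := (Finset.sum_mul _ _ _).symm
        _ = (∑ k ∈ dyQ α (Mk j) j, ψ k) / 2 ^ (Mk j * d) := (div_eq_mul_inv _ _).symm
      rw [hsum]
      exact dyAvg_le_emaxE hd α (Mk j) ψ j
    · have hzero : ∀ k, (if (E k ∧ j ∈ dyQ α (Mk k) k) then ψ k / 2 ^ (Mk k * d) else 0)
          = 0 := fun k => if_neg (fun hc => hEj (key k j hc.1 hc.2).1)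
      rw [tsum_congr hzero]
      simp
  calc lam * ∑' k : Fin d → ℤ, (if E k then ψ k else 0) ≤ ∑' k, ∑' j, G k j := step1
  _ = ∑' j, ∑' k, G k j := ENNReal.tsum_comm
  _ ≤ ∑' j, f j * (2^d * emaxE d ψ j) := ENNReal.tsum_le_tsum step3
  _ = 2^d * ∑' j, f j * emaxE d ψ j := by
      rw [← ENNReal.tsum_mul_left]
      exact tsum_congr (fun j => by ring)


/-! ### strong-type estimate by interpolation -/

lemma strong (hd : 0 < d) {p : ℝ} (hp : 1 < p) (α : Fin d → Bool) (n : ℕ)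
    (f ψ : (Fin d → ℤ) → ℝ≥0∞) :
    ∑' k : Fin d → ℤ, (dyM α n f k) ^ p * ψ k
      ≤ (tp (2*p) * 2^d * 2 * (tp (2*(p-1)) * (1 - tp (-(p-1)))⁻¹))
        * ∑' j : Fin d → ℤ, (f j)^p * emaxE d ψ j := by
  classical
  have hq : 0 < p - 1 := by linarith
  have hppos : 0 < p := by linarith
  set Cg : ℝ≥0∞ := tp (2*(p-1)) * (1 - tp (-(p-1)))⁻¹ with hCg
  have step1 : ∀ k, (dyM α n f k)^p * ψ k
      ≤ tp (2*p) * ∑' i : ℤ, (if tp (i:ℝ) < dyM α n f k then tp ((i:ℝ)*p) * ψ k else 0) := by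
    intro k
    have h1 := rpow_le_layercake hppos (dyM α n f k)
    calc (dyM α n f k)^p * ψ k
        ≤ (tp (2*p) * ∑' i : ℤ, (if tp (i:ℝ) < dyM α n f k then tp ((i:ℝ)*p) else 0)) * ψ k :=
          mul_le_mul_left h1 _
    _ = tp (2*p) * ∑' i : ℤ, (if tp (i:ℝ) < dyM α n f k then tp ((i:ℝ)*p) * ψ k else 0) := by
        rw [mul_assoc, ← ENNReal.tsum_mul_right]
        congr 1
        refine tsum_congr fun i => ?_
        split <;> simp
  have step2 : ∑' k : Fin d → ℤ, (dyM α n f k)^p * ψ k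
      ≤ tp (2*p) * ∑' i : ℤ, ∑' k : Fin d → ℤ,
          (if tp (i:ℝ) < dyM α n f k then tp ((i:ℝ)*p) * ψ k else 0) := by
    calc ∑' k : Fin d → ℤ, (dyM α n f k)^p * ψ k
        ≤ ∑' k : Fin d → ℤ, tp (2*p) * ∑' i : ℤ,
            (if tp (i:ℝ) < dyM α n f k then tp ((i:ℝ)*p) * ψ k else 0) :=
          ENNReal.tsum_le_tsum step1
    _ = tp (2*p) * ∑' k : Fin d → ℤ, ∑' i : ℤ,
            (if tp (i:ℝ) < dyM α n f k then tp ((i:ℝ)*p) * ψ k else 0) := ENNReal.tsum_mul_left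
    _ = tp (2*p) * ∑' i : ℤ, ∑' k : Fin d → ℤ,
            (if tp (i:ℝ) < dyM α n f k then tp ((i:ℝ)*p) * ψ k else 0) := by
          rw [ENNReal.tsum_comm]
  set fI : ℤ → (Fin d → ℤ) → ℝ≥0∞ := fun i j => if tp ((i:ℝ)-1) < f j then f j else 0 with hfI
  have incl : ∀ (i : ℤ) k, (tp (i:ℝ) < dyM α n f k) → tp ((i:ℝ)-1) < dyM α n (fI i) k := by
    intro i k hk
    by_contra hc
    push_neg at hc
    have hfg : ∀ j, f j ≤ fI i j + tp ((i:ℝ)-1) := by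
      intro j
      by_cases hj : tp ((i:ℝ)-1) < f j
      · simp only [hfI]
        rw [if_pos hj]
        exact le_self_add
      · simp only [hfI]
        rw [if_neg hj]
        rw [zero_add]
        exact not_lt.mp hj
    have h2 := dyM_add_const (α := α) (n := n) hfg k
    have h3 : dyM α n f k ≤ tp ((i:ℝ)-1) + tp ((i:ℝ)-1) := h2.trans (add_le_add hc le_rfl)
    have h4 : tp ((i:ℝ)-1) + tp ((i:ℝ)-1) = tp (i:ℝ) := by
      rw [← two_mul, ← tp_one, ← tp_add]
      congr 1
      ring
    rw [h4] at h3
    exact absurd hk (not_lt.mpr h3)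
  have wk : ∀ i : ℤ, ∑' k : Fin d → ℤ, (if tp (i:ℝ) < dyM α n f k then tp ((i:ℝ)*p) * ψ k else 0)
      ≤ 2 * 2^d * (tp ((i:ℝ)*(p-1)) * ∑' j : Fin d → ℤ, fI i j * emaxE d ψ j) := by
    intro i
    have h0 : ∑' k : Fin d → ℤ, (if tp (i:ℝ) < dyM α n f k then tp ((i:ℝ)*p) * ψ k else 0)
        = tp ((i:ℝ)*p) * ∑' k : Fin d → ℤ, (if tp (i:ℝ) < dyM α n f k then ψ k else 0) := by
      rw [← ENNReal.tsum_mul_left]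
      exact tsum_congr fun k => by split <;> simp
    have h1 : ∑' k : Fin d → ℤ, (if tp (i:ℝ) < dyM α n f k then ψ k else 0)
        ≤ ∑' k : Fin d → ℤ, (if tp ((i:ℝ)-1) < dyM α n (fI i) k then ψ k else 0) := by
      refine ENNReal.tsum_le_tsum fun k => ?_
      by_cases hk : tp (i:ℝ) < dyM α n f k
      · rw [if_pos hk, if_pos (incl i k hk)]
      · rw [if_neg hk]
        exact zero_le
    have h3 : ∑' k : Fin d → ℤ, (if tp ((i:ℝ)-1) < dyM α n (fI i) k then ψ k else 0)
        ≤ (tp ((i:ℝ)-1))⁻¹ * (2^d * ∑' j : Fin d → ℤ, fI i j * emaxE d ψ j) :=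
      le_inv_mul_of_mul_le (tp_ne_zero _) (tp_ne_top _) (weak hd α (fI i) ψ n (tp ((i:ℝ)-1)))
    have h4 : tp ((i:ℝ)*p) * (tp ((i:ℝ)-1))⁻¹ = 2 * tp ((i:ℝ)*(p-1)) := by
      rw [← tp_neg, ← tp_add, ← tp_one, ← tp_add]
      congr 1
      ring
    calc ∑' k : Fin d → ℤ, (if tp (i:ℝ) < dyM α n f k then tp ((i:ℝ)*p) * ψ k else 0)
        = tp ((i:ℝ)*p) * ∑' k : Fin d → ℤ, (if tp (i:ℝ) < dyM α n f k then ψ k else 0) := h0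
    _ ≤ tp ((i:ℝ)*p) * ∑' k : Fin d → ℤ, (if tp ((i:ℝ)-1) < dyM α n (fI i) k then ψ k else 0) :=
        mul_le_mul_right h1 _
    _ ≤ tp ((i:ℝ)*p) * ((tp ((i:ℝ)-1))⁻¹ *
          (2^d * ∑' j : Fin d → ℤ, fI i j * emaxE d ψ j)) := mul_le_mul_right h3 _
    _ = (tp ((i:ℝ)*p) * (tp ((i:ℝ)-1))⁻¹) *
          (2^d * ∑' j : Fin d → ℤ, fI i j * emaxE d ψ j) := by ring
    _ = 2 * 2^d * (tp ((i:ℝ)*(p-1)) * ∑' j : Fin d → ℤ, fI i j * emaxE d ψ j) := by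
        rw [h4]; ring
  have swap : ∑' i : ℤ, (tp ((i:ℝ)*(p-1)) * ∑' j : Fin d → ℤ, fI i j * emaxE d ψ j)
      = ∑' j : Fin d → ℤ, ∑' i : ℤ, tp ((i:ℝ)*(p-1)) * (fI i j * emaxE d ψ j) := by
    rw [← ENNReal.tsum_comm]
    exact tsum_congr fun i => ENNReal.tsum_mul_left.symm
  have inner : ∀ j, ∑' i : ℤ, tp ((i:ℝ)*(p-1)) * (fI i j * emaxE d ψ j)
      ≤ Cg * ((f j)^p * emaxE d ψ j) := by
    intro j
    have h0 : ∀ i : ℤ, tp ((i:ℝ)*(p-1)) * (fI i j * emaxE d ψ j)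
        = (f j * emaxE d ψ j) * (if tp ((i:ℝ)-1) < f j then tp ((i:ℝ)*(p-1)) else 0) := by
      intro i
      simp only [hfI]
      by_cases hj : tp ((i:ℝ)-1) < f j
      · rw [if_pos hj, if_pos hj]
        ring
      · rw [if_neg hj, if_neg hj]
        simp
    rw [tsum_congr h0, ENNReal.tsum_mul_left]
    have h1 := tsum_cond_le hq (f j)
    calc (f j * emaxE d ψ j) * ∑' i : ℤ, (if tp ((i:ℝ)-1) < f j then tp ((i:ℝ)*(p-1)) else 0)
        ≤ (f j * emaxE d ψ j) * (Cg * (f j)^(p-1)) := mul_le_mul_right h1 _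
    _ = Cg * ((f j * (f j)^(p-1)) * emaxE d ψ j) := by ring
    _ = Cg * ((f j)^p * emaxE d ψ j) := by
        rw [self_mul_rpow hq, show 1 + (p-1) = p by ring]
  calc ∑' k : Fin d → ℤ, (dyM α n f k)^p * ψ k
      ≤ tp (2*p) * ∑' i : ℤ, ∑' k : Fin d → ℤ,
          (if tp (i:ℝ) < dyM α n f k then tp ((i:ℝ)*p) * ψ k else 0) := step2
  _ ≤ tp (2*p) * ∑' i : ℤ, 2 * 2^d *
        (tp ((i:ℝ)*(p-1)) * ∑' j : Fin d → ℤ, fI i j * emaxE d ψ j) :=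
      mul_le_mul_right (ENNReal.tsum_le_tsum wk) _
  _ = tp (2*p) * (2 * 2^d * ∑' i : ℤ,
        (tp ((i:ℝ)*(p-1)) * ∑' j : Fin d → ℤ, fI i j * emaxE d ψ j)) := by
      rw [ENNReal.tsum_mul_left]
  _ = tp (2*p) * (2 * 2^d * ∑' j : Fin d → ℤ, ∑' i : ℤ,
        tp ((i:ℝ)*(p-1)) * (fI i j * emaxE d ψ j)) := by rw [swap]
  _ ≤ tp (2*p) * (2 * 2^d * ∑' j : Fin d → ℤ, Cg * ((f j)^p * emaxE d ψ j)) :=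
      mul_le_mul_right (mul_le_mul_right (ENNReal.tsum_le_tsum inner) _) _
  _ = tp (2*p) * (2 * 2^d * (Cg * ∑' j : Fin d → ℤ, (f j)^p * emaxE d ψ j)) := by
      rw [ENNReal.tsum_mul_left]
  _ = (tp (2*p) * 2^d * 2 * Cg) * ∑' j : Fin d → ℤ, (f j)^p * emaxE d ψ j := by ring


/-! ### passing to the full dyadic maximal operator, and the core inequality -/

lemma dyM_mono (α : Fin d → Bool) (f : (Fin d → ℤ) → ℝ≥0∞) (k : Fin d → ℤ) :
    Monotone fun n => dyM α n f k := by
  intro a b hab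
  refine iSup₂_le fun m hm => ?_
  refine le_iSup₂ (f := fun m (_ : m ∈ Finset.range (b+1)) => dyAvg α m f k) m
    (Finset.mem_range.mpr ?_)
  have := Finset.mem_range.mp hm
  omega

lemma iSup_dyM (α : Fin d → Bool) (f : (Fin d → ℤ) → ℝ≥0∞) (k : Fin d → ℤ) :
    (⨆ m : ℕ, dyAvg α m f k) = ⨆ n : ℕ, dyM α n f k := by
  refine le_antisymm (iSup_le fun m => ?_) (iSup_le fun n => iSup₂_le fun m _ => le_iSup (fun m : ℕ => dyAvg α m f k) m)
  exact le_trans (le_iSup₂ (f := fun m' (_ : m' ∈ Finset.range (m+1)) => dyAvg α m' f k) m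
    (Finset.mem_range.mpr (by omega))) (le_iSup (fun n => dyM α n f k) m)

lemma full {p : ℝ} (hp : 0 < p) (α : Fin d → Bool) (f ψ : (Fin d → ℤ) → ℝ≥0∞) :
    ∑' k : Fin d → ℤ, (⨆ m : ℕ, dyAvg α m f k)^p * ψ k
      = ⨆ n : ℕ, ∑' k : Fin d → ℤ, (dyM α n f k)^p * ψ k := by
  have h1 : ∀ k, (⨆ m : ℕ, dyAvg α m f k)^p * ψ k = ⨆ n : ℕ, (dyM α n f k)^p * ψ k := by
    intro k
    rw [iSup_dyM, iSup_rpow _ hp, ENNReal.iSup_mul]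
  rw [tsum_congr h1]
  refine tsum_iSup_mono _ fun k a b hab => ?_
  exact mul_le_mul_left (ENNReal.rpow_le_rpow (dyM_mono α f k hab) hp.le) _

lemma core (hd : 0 < d) {p : ℝ} (hp : 1 < p) (f ψ : (Fin d → ℤ) → ℝ≥0∞) :
    ∑' k : Fin d → ℤ, (emaxE d f k)^p * ψ k
      ≤ (((2:ℝ≥0∞)^(5*d))^p * ((2^d : ℕ) : ℝ≥0∞) *
          (tp (2*p) * 2^d * 2 * (tp (2*(p-1)) * (1 - tp (-(p-1)))⁻¹)))
        * ∑' j : Fin d → ℤ, (f j)^p * emaxE d ψ j := by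
  have hppos : 0 < p := by linarith
  set C1 : ℝ≥0∞ := tp (2*p) * 2^d * 2 * (tp (2*(p-1)) * (1 - tp (-(p-1)))⁻¹) with hC1
  have pointw : ∀ k, (emaxE d f k)^p * ψ k
      ≤ ((2:ℝ≥0∞)^(5*d))^p * ∑ α ∈ (Finset.univ : Finset (Fin d → Bool)),
          (⨆ m : ℕ, dyAvg α m f k)^p * ψ k := by
    intro k
    have h1 := emaxE_le_dyM hd f k
    have h2 : (emaxE d f k)^p
        ≤ ((2:ℝ≥0∞)^(5*d))^p * (⨆ α : Fin d → Bool, ⨆ m : ℕ, dyAvg α m f k)^p := by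
      calc (emaxE d f k)^p
          ≤ ((2:ℝ≥0∞)^(5*d) * ⨆ α : Fin d → Bool, ⨆ m : ℕ, dyAvg α m f k)^p :=
            ENNReal.rpow_le_rpow h1 hppos.le
      _ = _ := ENNReal.mul_rpow_of_nonneg _ _ hppos.le
    have h3 : (⨆ α : Fin d → Bool, ⨆ m : ℕ, dyAvg α m f k)^p
        ≤ ∑ α ∈ (Finset.univ : Finset (Fin d → Bool)), (⨆ m : ℕ, dyAvg α m f k)^p := by
      rw [iSup_rpow _ hppos]
      exact iSup_le fun α => Finset.single_le_sum (f := fun α' : Fin d → Bool => (⨆ m : ℕ, dyAvg α' m f k)^p) (fun _ _ => zero_le) (Finset.mem_univ α)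
    calc (emaxE d f k)^p * ψ k
        ≤ (((2:ℝ≥0∞)^(5*d))^p *
            ∑ α ∈ (Finset.univ : Finset (Fin d → Bool)), (⨆ m : ℕ, dyAvg α m f k)^p) * ψ k :=
          mul_le_mul_left (h2.trans (mul_le_mul_right h3 _)) _
    _ = ((2:ℝ≥0∞)^(5*d))^p * ∑ α ∈ (Finset.univ : Finset (Fin d → Bool)),
          (⨆ m : ℕ, dyAvg α m f k)^p * ψ k := by
        rw [mul_assoc, Finset.sum_mul]
  calc ∑' k : Fin d → ℤ, (emaxE d f k)^p * ψ k
      ≤ ∑' k : Fin d → ℤ, ((2:ℝ≥0∞)^(5*d))^p *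
          ∑ α ∈ (Finset.univ : Finset (Fin d → Bool)), (⨆ m : ℕ, dyAvg α m f k)^p * ψ k :=
        ENNReal.tsum_le_tsum pointw
  _ = ((2:ℝ≥0∞)^(5*d))^p * ∑' k : Fin d → ℤ,
        ∑ α ∈ (Finset.univ : Finset (Fin d → Bool)), (⨆ m : ℕ, dyAvg α m f k)^p * ψ k :=
      ENNReal.tsum_mul_left
  _ = ((2:ℝ≥0∞)^(5*d))^p * ∑ α ∈ (Finset.univ : Finset (Fin d → Bool)),
        ∑' k : Fin d → ℤ, (⨆ m : ℕ, dyAvg α m f k)^p * ψ k := by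
      rw [Summable.tsum_finsetSum (fun _ _ => ENNReal.summable)]
  _ ≤ ((2:ℝ≥0∞)^(5*d))^p * ∑ α ∈ (Finset.univ : Finset (Fin d → Bool)),
        C1 * ∑' j : Fin d → ℤ, (f j)^p * emaxE d ψ j := by
      refine mul_le_mul_right (Finset.sum_le_sum fun α _ => ?_) _
      rw [full hppos α f ψ]
      exact iSup_le fun n => strong hd hp α n f ψ
  _ = (((2:ℝ≥0∞)^(5*d))^p * ((2^d : ℕ) : ℝ≥0∞) * C1)
        * ∑' j : Fin d → ℤ, (f j)^p * emaxE d ψ j := by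
      rw [Finset.sum_const, Finset.card_univ, nsmul_eq_mul,
        show Fintype.card (Fin d → Bool) = 2^d by simp]
      push_cast
      ring

lemma const_ne_top (d : ℕ) {p : ℝ} (hp : 1 < p) :
    (((2:ℝ≥0∞)^(5*d))^p * ((2^d : ℕ) : ℝ≥0∞) *
      (tp (2*p) * 2^d * 2 * (tp (2*(p-1)) * (1 - tp (-(p-1)))⁻¹))) ≠ ⊤ := by
  have h1 : ((2:ℝ≥0∞)^(5*d))^p ≠ ⊤ :=
    ENNReal.rpow_ne_top_of_nonneg (by linarith) (pow2E_ne_top _)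
  have h2 : (1 - tp (-(p-1))) ≠ 0 := by
    have hlt : tp (-(p-1)) < 1 := tp_lt_one (by linarith)
    rw [ne_eq, tsub_eq_zero_iff_le]
    exact not_le.mpr hlt
  have h3 : (1 - tp (-(p-1)))⁻¹ ≠ ⊤ := by rwa [ne_eq, ENNReal.inv_eq_top]
  exact ENNReal.mul_ne_top (ENNReal.mul_ne_top h1 (ENNReal.natCast_ne_top _))
    (ENNReal.mul_ne_top
      (ENNReal.mul_ne_top (ENNReal.mul_ne_top (tp_ne_top _) (pow2E_ne_top _)) (by norm_num))
      (ENNReal.mul_ne_top (tp_ne_top _) h3))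

end FSaux

open FSaux in
/-- discrete Fefferman–Stein inequality for the even maximal operator. -/
theorem discrete_fefferman_stein_even (d : ℕ) (p : ℝ) (hp : 1 < p) :
    ∃ K : ℝ, 0 < K ∧ ∀ (x φ : (Fin d → ℤ) → ℝ), (∀ k, 0 ≤ φ k) →
      ∑' k : Fin d → ℤ, (emaxOpE d x k) ^ p * ENNReal.ofReal (φ k) ≤
        ENNReal.ofReal K * ∑' k : Fin d → ℤ, ENNReal.ofReal (|x k| ^ p) * emaxOpE d φ k := by
  have hppos : 0 < p := by linarith
  rcases Nat.eq_zero_or_pos d with hd0 | hd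
  · subst hd0
    refine ⟨1, one_pos, fun x φ hφ => ?_⟩
    have hzero : ∀ k : Fin 0 → ℤ, emaxOpE 0 x k = 0 := by
      intro k
      rw [emaxOpE]
      have hempty : ∀ N : ℕ, cubeR 0 k (N+1) = ∅ := by
        intro N
        rw [cubeR]
        have he : (fun i : Fin 0 => k i - ((N+1:ℕ):ℤ)) = (fun i : Fin 0 => k i + ((N+1:ℕ):ℤ)) :=
          funext fun i => i.elim0
        rw [he, Finset.Ico_self]
      simp [hempty]
    rw [tsum_congr (fun k => by rw [hzero k, ENNReal.zero_rpow_of_pos hppos, zero_mul]),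
      tsum_zero]
    exact zero_le
  · set C0 : ℝ≥0∞ := ((2:ℝ≥0∞)^(5*d))^p * ((2^d : ℕ) : ℝ≥0∞) *
      (tp (2*p) * 2^d * 2 * (tp (2*(p-1)) * (1 - tp (-(p-1)))⁻¹)) with hC0
    have hne : C0 ≠ ⊤ := const_ne_top d hp
    refine ⟨C0.toReal + 1, by positivity, fun x φ hφ => ?_⟩
    set f : (Fin d → ℤ) → ℝ≥0∞ := fun k => ENNReal.ofReal |x k| with hf
    set ψ : (Fin d → ℤ) → ℝ≥0∞ := fun k => ENNReal.ofReal (φ k) with hψ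
    have hex : emaxOpE d x = emaxE d f := rfl
    have heφ : ∀ k, emaxOpE d φ k = emaxE d ψ k := by
      intro k
      rw [emaxOpE, emaxE]
      refine iSup_congr fun N => ?_
      congr 1
      refine Finset.sum_congr rfl fun j _ => ?_
      simp only [hψ]
      rw [abs_of_nonneg (hφ j)]
    have hrhs : ∀ k, ENNReal.ofReal (|x k| ^ p) = (f k)^p := fun k =>
      (ENNReal.ofReal_rpow_of_nonneg (abs_nonneg _) hppos.le).symm
    have hKbound : C0 ≤ ENNReal.ofReal (C0.toReal + 1) := by
      calc C0 = ENNReal.ofReal C0.toReal := (ENNReal.ofReal_toReal hne).symm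
      _ ≤ _ := ENNReal.ofReal_le_ofReal (by linarith)
    calc ∑' k : Fin d → ℤ, (emaxOpE d x k)^p * ENNReal.ofReal (φ k)
        = ∑' k : Fin d → ℤ, (emaxE d f k)^p * ψ k := by rw [hex]
    _ ≤ C0 * ∑' j : Fin d → ℤ, (f j)^p * emaxE d ψ j := core hd hp f ψ
    _ ≤ ENNReal.ofReal (C0.toReal + 1) * ∑' j : Fin d → ℤ, (f j)^p * emaxE d ψ j :=
        mul_le_mul_left hKbound _
    _ = ENNReal.ofReal (C0.toReal + 1) *
          ∑' j : Fin d → ℤ, ENNReal.ofReal (|x j| ^ p) * emaxOpE d φ j := by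
        congr 1
        exact tsum_congr fun j => by rw [hrhs j, heφ j]
end
end

section
/- Let 0 < α < d, 1 < p < q < d/α, and x ∈ ℓ^p_q(ℤ^d). There exists a constant C > 0 (independent of x and k) such that for every k ∈ ℤ^d and every real r ≥ 1, |I_α x(k)| ≤ C (r^α Mx(k) + r^{α − d/q} ‖x‖_{ℓ^p_q(ℤ^d)}), where I_α x(k) = Σ_{i ≠ k} x(i)/‖k−i‖_∞^{d−α}. -/
open scoped BigOperators ENNReal

noncomputable section

/-- The discrete Riesz potential `I_α x (k) = ∑_{i ≠ k} x i / ‖k - i‖_∞^{d - α}`. -/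
def rieszPot (d : ℕ) (α : ℝ) (x : (Fin d → ℤ) → ℝ) (k : Fin d → ℤ) : ℝ :=
  ∑' i : {i : Fin d → ℤ // i ≠ k}, x i / (snorm' d (k - i) : ℝ) ^ ((d : ℝ) - α)

section auxRiesz

lemma card_cubeS (d : ℕ) (m : Fin d → ℤ) (N : ℕ) :
    (cubeS d m N).card = (2 * N + 1) ^ d := by
  unfold cubeS
  rw [Pi.card_Icc]
  have h : ∀ i : Fin d, (Finset.Icc (m i - N) (m i + N)).card = 2 * N + 1 := by
    intro i
    rw [Int.card_Icc]
    omega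
  simp [h, Finset.prod_const, Finset.card_univ]

lemma mem_cubeS_iff {d : ℕ} {k i : Fin d → ℤ} {N : ℕ} :
    i ∈ cubeS d k N ↔ snorm' d (k - i) ≤ N := by
  unfold cubeS snorm'
  rw [Finset.mem_Icc, Finset.sup_le_iff]
  simp only [Finset.mem_univ, true_implies, Pi.le_def, Pi.sub_apply]
  constructor
  · rintro ⟨h1, h2⟩ t
    have := h1 t; have := h2 t; omega
  · intro h
    exact ⟨fun t => by have := h t; omega, fun t => by have := h t; omega⟩

lemma one_le_snorm' {d : ℕ} {k i : Fin d → ℤ} (h : i ≠ k) : 1 ≤ snorm' d (k - i) := by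
  by_contra hc
  push_neg at hc
  apply h
  funext t
  have h1 : ((k - i) t).natAbs ≤ snorm' d (k - i) :=
    Finset.le_sup (f := fun t => ((k - i) t).natAbs) (Finset.mem_univ t)
  have h2 : (k t - i t).natAbs = 0 := by
    have : ((k - i) t) = k t - i t := rfl
    omega
  omega

lemma two_pow_clog_le (m : ℕ) (hm : 1 ≤ m) : 2 ^ Nat.clog 2 m ≤ 2 * m := by
  rcases eq_or_lt_of_le hm with h | h
  · rw [← h]
    simp [Nat.clog_one_right]
  · have h1 : 0 < Nat.clog 2 m := Nat.clog_pos one_lt_two h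
    have h2 : 2 ^ (Nat.clog 2 m - 1) < m := Nat.pow_pred_clog_lt_self one_lt_two h
    have h3 : 2 ^ Nat.clog 2 m = 2 * 2 ^ (Nat.clog 2 m - 1) := by
      rw [← pow_succ']
      congr 1
      omega
    omega

lemma rpow_natpow (j : ℕ) (e : ℝ) : ((2:ℝ) ^ j) ^ e = (2:ℝ) ^ ((j:ℝ) * e) := by
  rw [← Real.rpow_natCast 2 j, ← Real.rpow_mul (by norm_num)]

lemma pow_rpow_swap (e : ℝ) (j : ℕ) : ((2:ℝ) ^ e) ^ j = (2:ℝ) ^ (e * (j:ℝ)) := by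
  rw [← Real.rpow_natCast ((2:ℝ) ^ e) j, ← Real.rpow_mul (by norm_num)]

lemma clog_rpow_bound (m : ℕ) (hm : 1 ≤ m) {e : ℝ} (he : e ≤ 0) :
    (m:ℝ) ^ e ≤ (2:ℝ) ^ (-e) * ((2:ℝ) ^ Nat.clog 2 m) ^ e := by
  have h2m : ((2:ℝ) ^ Nat.clog 2 m) ≤ 2 * m := by
    exact_mod_cast two_pow_clog_le m hm
  have hpos : (0:ℝ) < ((2:ℝ) ^ Nat.clog 2 m) / 2 := by positivity
  have hle : ((2:ℝ) ^ Nat.clog 2 m) / 2 ≤ (m:ℝ) := by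
    rw [div_le_iff₀ (by norm_num)]
    linarith
  have h1 : (m:ℝ) ^ e ≤ (((2:ℝ) ^ Nat.clog 2 m) / 2) ^ e :=
    Real.rpow_le_rpow_of_nonpos hpos hle he
  refine h1.trans_eq ?_
  rw [Real.div_rpow (by positivity) (by norm_num), div_eq_mul_inv, ← Real.rpow_neg (by norm_num)]
  ring

lemma holder_sum {p : ℝ} (hp : 1 < p) {ι : Type*} (s : Finset ι) (x : ι → ℝ) :
    ∑ i ∈ s, |x i| ≤ (∑ i ∈ s, |x i| ^ p) ^ (1/p) * (s.card : ℝ) ^ (1 - 1/p) := by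
  have hpq : p.HolderConjugate (p / (p - 1)) := (Real.holderConjugate_iff_eq_conjExponent hp).mpr rfl
  have h := Real.inner_le_Lp_mul_Lq s (fun i => |x i|) (fun _ => 1) hpq
  simp only [mul_one, abs_abs, abs_one, Real.one_rpow, Finset.sum_const, nsmul_eq_mul] at h
  have he : 1 / (p / (p - 1)) = 1 - 1/p := by
    field_simp
  rw [he] at h
  simpa using h


lemma part1_bound (J : ℕ) {a b : ℝ} (ha : 0 ≤ a) (hb : 1 < b) :
    (∑' j : ℕ, if j < J then ENNReal.ofReal a * ENNReal.ofReal b ^ j else 0)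
      ≤ ENNReal.ofReal (a * (b ^ J / (b - 1))) := by
  have hb0 : (0:ℝ) ≤ b := by linarith
  rw [tsum_eq_sum (s := Finset.range J)
    (by intro j hj; rw [if_neg]; exact fun h => hj (Finset.mem_range.mpr h))]
  rw [Finset.sum_congr rfl (fun j hj => if_pos (Finset.mem_range.mp hj))]
  rw [← Finset.mul_sum]
  have h1 : ∀ j : ℕ, ENNReal.ofReal b ^ j = ENNReal.ofReal (b ^ j) := fun j =>
    (ENNReal.ofReal_pow hb0 j).symm
  rw [Finset.sum_congr rfl (fun j _ => h1 j)]
  rw [← ENNReal.ofReal_sum_of_nonneg (fun j _ => pow_nonneg hb0 j)]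
  rw [← ENNReal.ofReal_mul ha]
  apply ENNReal.ofReal_le_ofReal
  apply mul_le_mul_of_nonneg_left _ ha
  rw [geom_sum_eq (ne_of_gt hb) J]
  gcongr
  · linarith

lemma part2_bound (J : ℕ) {a b : ℝ} (ha : 0 ≤ a) (hb0 : 0 ≤ b) (hb1 : b < 1) :
    (∑' j : ℕ, if j < J then 0 else ENNReal.ofReal a * ENNReal.ofReal b ^ j)
      ≤ ENNReal.ofReal (a * (b ^ J * (1 - b)⁻¹)) := by
  have hre : (∑' j : ℕ, if j < J then 0 else ENNReal.ofReal a * ENNReal.ofReal b ^ j)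
      = ∑' m : ℕ, ENNReal.ofReal a * ENNReal.ofReal b ^ (m + J) := by
    have hinj : Function.Injective (fun m : ℕ => m + J) := fun u v huv => by simpa using huv
    have hsupp : Function.support
        (fun j : ℕ => if j < J then 0 else ENNReal.ofReal a * ENNReal.ofReal b ^ j)
          ⊆ Set.range (fun m : ℕ => m + J) := by
      intro j hj
      simp only [Function.mem_support] at hj
      by_cases h : j < J
      · simp [h] at hj
      · exact ⟨j - J, by show j - J + J = j; omega⟩
    rw [← Function.Injective.tsum_eq hinj hsupp]
    exact tsum_congr fun m => by rw [if_neg (by omega)]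
  rw [hre]
  have hcalc : (∑' m : ℕ, ENNReal.ofReal a * ENNReal.ofReal b ^ (m + J))
      = ENNReal.ofReal a * ENNReal.ofReal b ^ J * (1 - ENNReal.ofReal b)⁻¹ := by
    calc (∑' m : ℕ, ENNReal.ofReal a * ENNReal.ofReal b ^ (m + J))
        = ∑' m : ℕ, ENNReal.ofReal a * ENNReal.ofReal b ^ J * ENNReal.ofReal b ^ m := by
          refine tsum_congr fun m => ?_
          rw [pow_add]
          ring
      _ = ENNReal.ofReal a * ENNReal.ofReal b ^ J * ∑' m : ℕ, ENNReal.ofReal b ^ m :=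
          ENNReal.tsum_mul_left
      _ = ENNReal.ofReal a * ENNReal.ofReal b ^ J * (1 - ENNReal.ofReal b)⁻¹ := by
          rw [ENNReal.tsum_geometric]
  rw [hcalc]
  have h2 : (1 - ENNReal.ofReal b)⁻¹ = ENNReal.ofReal ((1 - b)⁻¹) := by
    rw [ENNReal.ofReal_inv_of_pos (by linarith), ENNReal.ofReal_sub 1 hb0, ENNReal.ofReal_one]
  rw [h2, ← ENNReal.ofReal_pow hb0, ← ENNReal.ofReal_mul ha, ← ENNReal.ofReal_mul
    (mul_nonneg ha (pow_nonneg hb0 J)), mul_assoc]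

end auxRiesz


set_option maxHeartbeats 1600000 in
/-- the key pointwise estimate for the discrete Riesz potential. -/
theorem riesz_pointwise_estimate (d : ℕ) (α p q : ℝ) (hα : 0 < α) (hαd : α < d)
    (hp : 1 < p) (hpq : p < q) (hq : q < d / α)
    (x : (Fin d → ℤ) → ℝ) (hx : MemMorrey d p q x) :
    ∃ C : ℝ, 0 < C ∧ ∀ (k : Fin d → ℤ) (r : ℝ), 1 ≤ r →
      |rieszPot d α x k| ≤
        C * (r ^ α * maxOp d x k + r ^ (α - d / q) * morreyNorm d p q x) := by
  classical
  have hd0 : (0:ℝ) < d := hα.trans hαd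
  have hq1 : (1:ℝ) < q := hp.trans hpq
  have hq0 : (0:ℝ) < q := lt_trans one_pos hq1
  have hp0 : (0:ℝ) < p := lt_trans one_pos hp
  have hα' : α < d / q := by
    rw [lt_div_iff₀ hq0]
    have h := (lt_div_iff₀ hα).mp hq
    linarith
  have hβ : 0 < d / q - α := by linarith
  have h2α : (1:ℝ) < (2:ℝ) ^ α := by
    have h := Real.rpow_lt_rpow_of_exponent_lt (x := (2:ℝ)) one_lt_two hα
    simpa using h
  have h2β1 : (2:ℝ) ^ (-(d/q - α)) < 1 :=
    Real.rpow_lt_one_of_one_lt_of_neg one_lt_two (by linarith)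
  have h2β0 : (0:ℝ) < (2:ℝ) ^ (-(d/q - α)) := Real.rpow_pos_of_pos two_pos _
  set K1 : ℝ := (2:ℝ) ^ ((d:ℝ) - α) * (4:ℝ) ^ d with hK1def
  have hK1 : 0 < K1 := by rw [hK1def]; positivity
  set c1 : ℝ := (4:ℝ) ^ α / ((2:ℝ) ^ α - 1) with hc1def
  set c2 : ℝ := (1 - (2:ℝ) ^ (-(d/q - α)))⁻¹ with hc2def
  have hc1 : 0 < c1 := by
    rw [hc1def]; exact div_pos (Real.rpow_pos_of_pos (by norm_num) α) (by linarith)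
  have hc2 : 0 < c2 := by rw [hc2def]; exact inv_pos.mpr (by linarith)
  refine ⟨K1 * (c1 + c2), by positivity, ?_⟩
  intro k r hr
  have hr0 : (0:ℝ) < r := lt_of_lt_of_le one_pos hr
  -- Morrey norm facts
  have hmor : ∀ (m : Fin d → ℤ) (N : ℕ),
      (((2 * (N:ℝ) + 1) ^ d) ^ (1 / q - 1 / p)) *
        (∑ i ∈ cubeS d m N, |x i| ^ p) ^ (1 / p) ≤ morreyNorm d p q x :=
    fun m N => le_ciSup hx (m, N)
  have hX0 : 0 ≤ morreyNorm d p q x := le_trans (by positivity) (hmor k 0)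
  have hApos : ∀ N : ℕ, (0:ℝ) < (2 * (N:ℝ) + 1) ^ d := fun N => by positivity
  have hAone : ∀ N : ℕ, (1:ℝ) ≤ (2 * (N:ℝ) + 1) ^ d := fun N =>
    one_le_pow₀ (by
      have : (0:ℝ) ≤ (N:ℝ) := Nat.cast_nonneg N
      linarith)
  have hS : ∀ (m : Fin d → ℤ) (N : ℕ),
      (∑ i ∈ cubeS d m N, |x i| ^ p) ^ (1 / p) ≤
        ((2 * (N:ℝ) + 1) ^ d) ^ (1/p - 1/q) * morreyNorm d p q x := by
    intro m N
    have h1 := mul_le_mul_of_nonneg_left (hmor m N)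
      (Real.rpow_nonneg (hApos N).le (1/p - 1/q))
    rw [← mul_assoc, ← Real.rpow_add (hApos N)] at h1
    have he : 1/p - 1/q + (1/q - 1/p) = 0 := by ring
    rwa [he, Real.rpow_zero, one_mul] at h1
  have hT2 : ∀ N : ℕ, ∑ i ∈ cubeS d k N, |x i| ≤
      ((2 * (N:ℝ) + 1) ^ d) ^ (1 - 1/q) * morreyNorm d p q x := by
    intro N
    have hh := holder_sum hp (cubeS d k N) x
    rw [card_cubeS] at hh
    have hcast : (((2 * N + 1) ^ d : ℕ) : ℝ) = (2 * (N:ℝ) + 1) ^ d := by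
      push_cast; ring
    rw [hcast] at hh
    refine hh.trans ?_
    calc (∑ i ∈ cubeS d k N, |x i| ^ p) ^ (1/p) * ((2 * (N:ℝ) + 1) ^ d) ^ (1 - 1/p)
        ≤ (((2 * (N:ℝ) + 1) ^ d) ^ (1/p - 1/q) * morreyNorm d p q x) *
            ((2 * (N:ℝ) + 1) ^ d) ^ (1 - 1/p) :=
          mul_le_mul_of_nonneg_right (hS k N) (Real.rpow_nonneg (hApos N).le _)
      _ = ((2 * (N:ℝ) + 1) ^ d) ^ (1 - 1/q) * morreyNorm d p q x := by
          rw [mul_right_comm, ← Real.rpow_add (hApos N)]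
          congr 2
          ring
  -- maximal operator facts
  have havg : ∀ N : ℕ, (∑ i ∈ cubeS d k N, |x i|) / (2 * (N:ℝ) + 1) ^ d ≤
      morreyNorm d p q x := by
    intro N
    rw [div_le_iff₀ (hApos N)]
    refine (hT2 N).trans ?_
    have h1 : ((2 * (N:ℝ) + 1) ^ d) ^ (1 - 1/q) ≤ ((2 * (N:ℝ) + 1) ^ d) ^ (1:ℝ) :=
      Real.rpow_le_rpow_of_exponent_le (hAone N) (by
        have : 0 < 1/q := by positivity
        linarith)
    rw [Real.rpow_one] at h1
    calc ((2 * (N:ℝ) + 1) ^ d) ^ (1 - 1/q) * morreyNorm d p q x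
        ≤ (2 * (N:ℝ) + 1) ^ d * morreyNorm d p q x :=
          mul_le_mul_of_nonneg_right h1 hX0
      _ = morreyNorm d p q x * (2 * (N:ℝ) + 1) ^ d := mul_comm _ _
  have hMb : BddAbove (Set.range fun N : ℕ =>
      (∑ i ∈ cubeS d k N, |x i|) / (2 * (N:ℝ) + 1) ^ d) := by
    refine ⟨morreyNorm d p q x, ?_⟩
    rintro _ ⟨N, rfl⟩
    exact havg N
  have hM : ∀ N : ℕ, ∑ i ∈ cubeS d k N, |x i| ≤
      (2 * (N:ℝ) + 1) ^ d * maxOp d x k := by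
    intro N
    have h1 : (∑ i ∈ cubeS d k N, |x i|) / (2 * (N:ℝ) + 1) ^ d ≤ maxOp d x k :=
      le_ciSup hMb N
    rw [div_le_iff₀ (hApos N)] at h1
    linarith [h1]
  have hM0 : 0 ≤ maxOp d x k := le_trans (by positivity) (le_ciSup hMb 0)

  -- pointwise absolute value of the Riesz terms
  have habs : ∀ i : {i : Fin d → ℤ // i ≠ k},
      |x i.1 / (snorm' d (k - i.1) : ℝ) ^ ((d:ℝ) - α)|
        = |x i.1| * (snorm' d (k - i.1) : ℝ) ^ (α - (d:ℝ)) := by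
    intro i
    have hn1 : (1:ℝ) ≤ (snorm' d (k - i.1) : ℝ) := by exact_mod_cast one_le_snorm' i.2
    have hnp : (0:ℝ) < (snorm' d (k - i.1) : ℝ) := lt_of_lt_of_le one_pos hn1
    rw [abs_div, abs_of_nonneg (Real.rpow_nonneg hnp.le _), div_eq_mul_inv,
      ← Real.rpow_neg hnp.le, neg_sub]
  have hcast2 : ∀ j : ℕ, ((2 ^ j : ℕ) : ℝ) = (2:ℝ) ^ j := by
    intro j; push_cast; ring
  have hb4 : ∀ j : ℕ, (2 * (2:ℝ) ^ j + 1) ^ d ≤ ((4:ℝ) * (2:ℝ) ^ j) ^ d := by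
    intro j
    apply pow_le_pow_left₀ (by positivity)
    have h1 : (1:ℝ) ≤ (2:ℝ) ^ j := one_le_pow₀ one_le_two
    linarith
  -- key ENNReal estimate
  have key : (∑' i : {i : Fin d → ℤ // i ≠ k},
      ENNReal.ofReal |x i.1 / (snorm' d (k - i.1) : ℝ) ^ ((d:ℝ) - α)|) ≤
      ENNReal.ofReal (K1 * (c1 + c2) *
        (r ^ α * maxOp d x k + r ^ (α - d / q) * morreyNorm d p q x)) := by
    have hsigma : (∑' i : {i : Fin d → ℤ // i ≠ k},
        ENNReal.ofReal |x i.1 / (snorm' d (k - i.1) : ℝ) ^ ((d:ℝ) - α)|) =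
        ∑' j : ℕ, ∑' b : {i : {i : Fin d → ℤ // i ≠ k} //
            Nat.clog 2 (snorm' d (k - i.1)) = j},
          ENNReal.ofReal |x b.1.1 / (snorm' d (k - b.1.1) : ℝ) ^ ((d:ℝ) - α)| := by
      rw [← (Equiv.sigmaFiberEquiv
          (fun i : {i : Fin d → ℤ // i ≠ k} => Nat.clog 2 (snorm' d (k - i.1)))).tsum_eq
        (fun i : {i : Fin d → ℤ // i ≠ k} =>
          ENNReal.ofReal |x i.1 / (snorm' d (k - i.1) : ℝ) ^ ((d:ℝ) - α)|)]
      rw [ENNReal.tsum_sigma']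
      rfl
    rw [hsigma]
    -- per-fiber bound
    have hfib : ∀ j : ℕ,
        (∑' b : {i : {i : Fin d → ℤ // i ≠ k} // Nat.clog 2 (snorm' d (k - i.1)) = j},
          ENNReal.ofReal |x b.1.1 / (snorm' d (k - b.1.1) : ℝ) ^ ((d:ℝ) - α)|) ≤
        ENNReal.ofReal ((2:ℝ) ^ ((d:ℝ) - α) * ((2:ℝ) ^ j) ^ (α - (d:ℝ))) *
          ENNReal.ofReal (∑ i ∈ cubeS d k (2 ^ j), |x i|) := by
      intro j
      have hstep : ∀ b : {i : {i : Fin d → ℤ // i ≠ k} //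
          Nat.clog 2 (snorm' d (k - i.1)) = j},
          ENNReal.ofReal |x b.1.1 / (snorm' d (k - b.1.1) : ℝ) ^ ((d:ℝ) - α)| ≤
          ENNReal.ofReal ((2:ℝ) ^ ((d:ℝ) - α) * ((2:ℝ) ^ j) ^ (α - (d:ℝ))) *
            ENNReal.ofReal |x b.1.1| := by
        intro b
        rw [habs b.1, ← ENNReal.ofReal_mul (by positivity)]
        apply ENNReal.ofReal_le_ofReal
        have h1 := clog_rpow_bound (snorm' d (k - b.1.1)) (one_le_snorm' b.1.2)
          (e := α - (d:ℝ)) (by linarith)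
        rw [b.2, neg_sub] at h1
        calc |x b.1.1| * (snorm' d (k - b.1.1) : ℝ) ^ (α - (d:ℝ))
            ≤ |x b.1.1| * ((2:ℝ) ^ ((d:ℝ) - α) * ((2:ℝ) ^ j) ^ (α - (d:ℝ))) :=
              mul_le_mul_of_nonneg_left h1 (abs_nonneg _)
          _ = (2:ℝ) ^ ((d:ℝ) - α) * ((2:ℝ) ^ j) ^ (α - (d:ℝ)) * |x b.1.1| := by ring
      calc (∑' b : {i : {i : Fin d → ℤ // i ≠ k} //
              Nat.clog 2 (snorm' d (k - i.1)) = j},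
            ENNReal.ofReal |x b.1.1 / (snorm' d (k - b.1.1) : ℝ) ^ ((d:ℝ) - α)|)
          ≤ ∑' b : {i : {i : Fin d → ℤ // i ≠ k} //
              Nat.clog 2 (snorm' d (k - i.1)) = j},
            ENNReal.ofReal ((2:ℝ) ^ ((d:ℝ) - α) * ((2:ℝ) ^ j) ^ (α - (d:ℝ))) *
              ENNReal.ofReal |x b.1.1| := ENNReal.tsum_le_tsum hstep
        _ = ENNReal.ofReal ((2:ℝ) ^ ((d:ℝ) - α) * ((2:ℝ) ^ j) ^ (α - (d:ℝ))) *
            ∑' b : {i : {i : Fin d → ℤ // i ≠ k} //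
              Nat.clog 2 (snorm' d (k - i.1)) = j},
              ENNReal.ofReal |x b.1.1| := ENNReal.tsum_mul_left
        _ ≤ ENNReal.ofReal ((2:ℝ) ^ ((d:ℝ) - α) * ((2:ℝ) ^ j) ^ (α - (d:ℝ))) *
            ENNReal.ofReal (∑ i ∈ cubeS d k (2 ^ j), |x i|) := by
            refine mul_le_mul_right ?_ _
            have hmem : ∀ b : {i : {i : Fin d → ℤ // i ≠ k} //
                Nat.clog 2 (snorm' d (k - i.1)) = j}, b.1.1 ∈ cubeS d k (2 ^ j) := by
              intro b
              rw [mem_cubeS_iff]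
              have h1 : snorm' d (k - b.1.1) ≤ 2 ^ Nat.clog 2 (snorm' d (k - b.1.1)) :=
                Nat.le_pow_clog one_lt_two _
              rwa [b.2] at h1
            have hinj : Function.Injective
                (fun b : {i : {i : Fin d → ℤ // i ≠ k} //
                  Nat.clog 2 (snorm' d (k - i.1)) = j} =>
                  (⟨b.1.1, hmem b⟩ : {i // i ∈ cubeS d k (2 ^ j)})) := by
              intro a b hab
              apply Subtype.ext
              apply Subtype.ext
              simpa [Subtype.ext_iff] using hab
            have h3 := ENNReal.tsum_comp_le_tsum_of_injective hinj
              (fun i : {i // i ∈ cubeS d k (2 ^ j)} => ENNReal.ofReal |x i.1|)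
            rw [Finset.tsum_subtype (cubeS d k (2 ^ j))
              (fun i => ENNReal.ofReal |x i|)] at h3
            rwa [← ENNReal.ofReal_sum_of_nonneg (fun i _ => abs_nonneg (x i))] at h3
    -- bound each summand two ways
    have hPj : ∀ j : ℕ,
        ENNReal.ofReal ((2:ℝ) ^ ((d:ℝ) - α) * ((2:ℝ) ^ j) ^ (α - (d:ℝ))) *
          ENNReal.ofReal (∑ i ∈ cubeS d k (2 ^ j), |x i|) ≤
        ENNReal.ofReal (K1 * maxOp d x k) * ENNReal.ofReal ((2:ℝ) ^ α) ^ j := by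
      intro j
      rw [← ENNReal.ofReal_mul (by positivity),
        ← ENNReal.ofReal_pow (Real.rpow_pos_of_pos two_pos α).le,
        ← ENNReal.ofReal_mul (mul_nonneg hK1.le hM0)]
      apply ENNReal.ofReal_le_ofReal
      have hTa := hM (2 ^ j)
      rw [hcast2 j] at hTa
      have halg : ((2:ℝ) ^ j) ^ (α - (d:ℝ)) * ((2:ℝ) ^ j) ^ d = ((2:ℝ) ^ α) ^ j := by
        rw [rpow_natpow, pow_rpow_swap, ← pow_mul, ← Real.rpow_natCast 2 (j * d),
          ← Real.rpow_add two_pos]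
        congr 1
        push_cast
        ring
      calc (2:ℝ) ^ ((d:ℝ) - α) * ((2:ℝ) ^ j) ^ (α - (d:ℝ)) *
            (∑ i ∈ cubeS d k (2 ^ j), |x i|)
          ≤ (2:ℝ) ^ ((d:ℝ) - α) * ((2:ℝ) ^ j) ^ (α - (d:ℝ)) *
              (((4:ℝ) * (2:ℝ) ^ j) ^ d * maxOp d x k) := by
            apply mul_le_mul_of_nonneg_left _ (by positivity)
            exact hTa.trans (mul_le_mul_of_nonneg_right (hb4 j) hM0)
        _ = K1 * maxOp d x k * (((2:ℝ) ^ j) ^ (α - (d:ℝ)) * ((2:ℝ) ^ j) ^ d) := by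
            rw [hK1def, mul_pow]
            ring
        _ = K1 * maxOp d x k * ((2:ℝ) ^ α) ^ j := by rw [halg]
    have hQj : ∀ j : ℕ,
        ENNReal.ofReal ((2:ℝ) ^ ((d:ℝ) - α) * ((2:ℝ) ^ j) ^ (α - (d:ℝ))) *
          ENNReal.ofReal (∑ i ∈ cubeS d k (2 ^ j), |x i|) ≤
        ENNReal.ofReal (K1 * morreyNorm d p q x) *
          ENNReal.ofReal ((2:ℝ) ^ (-(d/q - α))) ^ j := by
      intro j
      rw [← ENNReal.ofReal_mul (by positivity),
        ← ENNReal.ofReal_pow (Real.rpow_pos_of_pos two_pos _).le,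
        ← ENNReal.ofReal_mul (mul_nonneg hK1.le hX0)]
      apply ENNReal.ofReal_le_ofReal
      have hTb := hT2 (2 ^ j)
      rw [hcast2 j] at hTb
      have hoq : 1/q < 1 := by rw [div_lt_one hq0]; exact hq1
      have hmono : ((2 * (2:ℝ) ^ j + 1) ^ d) ^ (1 - 1/q)
          ≤ (((4:ℝ) * (2:ℝ) ^ j) ^ d) ^ (1 - 1/q) :=
        Real.rpow_le_rpow (by positivity) (hb4 j) (by linarith)
      have hsplit4 : (((4:ℝ) * (2:ℝ) ^ j) ^ d) ^ (1 - 1/q)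
          ≤ (4:ℝ) ^ d * (((2:ℝ) ^ j) ^ d) ^ (1 - 1/q) := by
        rw [mul_pow, Real.mul_rpow (by positivity) (by positivity)]
        apply mul_le_mul_of_nonneg_right _ (Real.rpow_nonneg (by positivity) _)
        have h44 : (1:ℝ) ≤ (4:ℝ) ^ d := one_le_pow₀ (by norm_num)
        calc ((4:ℝ) ^ d) ^ (1 - 1/q) ≤ ((4:ℝ) ^ d) ^ (1:ℝ) :=
              Real.rpow_le_rpow_of_exponent_le h44 (by
                have h0q : 0 < 1/q := by positivity
                linarith)
          _ = (4:ℝ) ^ d := Real.rpow_one _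
      have halg2 : ((2:ℝ) ^ j) ^ (α - (d:ℝ)) * (((2:ℝ) ^ j) ^ d) ^ (1 - 1/q)
          = ((2:ℝ) ^ (-(d/q - α))) ^ j := by
        rw [rpow_natpow, ← pow_mul, ← Real.rpow_natCast 2 (j * d),
          ← Real.rpow_mul (by norm_num), ← Real.rpow_add two_pos, pow_rpow_swap]
        congr 1
        push_cast
        field_simp
        ring
      calc (2:ℝ) ^ ((d:ℝ) - α) * ((2:ℝ) ^ j) ^ (α - (d:ℝ)) *
            (∑ i ∈ cubeS d k (2 ^ j), |x i|)
          ≤ (2:ℝ) ^ ((d:ℝ) - α) * ((2:ℝ) ^ j) ^ (α - (d:ℝ)) *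
              (((4:ℝ) ^ d * (((2:ℝ) ^ j) ^ d) ^ (1 - 1/q)) * morreyNorm d p q x) := by
            apply mul_le_mul_of_nonneg_left _ (by positivity)
            refine hTb.trans (mul_le_mul_of_nonneg_right (hmono.trans hsplit4) hX0)
        _ = K1 * morreyNorm d p q x *
              (((2:ℝ) ^ j) ^ (α - (d:ℝ)) * (((2:ℝ) ^ j) ^ d) ^ (1 - 1/q)) := by
            rw [hK1def]
            ring
        _ = K1 * morreyNorm d p q x * ((2:ℝ) ^ (-(d/q - α))) ^ j := by rw [halg2]
    -- choice of the splitting index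
    have hceil1 : 1 ≤ ⌈r⌉₊ := Nat.one_le_ceil_iff.mpr hr0
    have hJr : r ≤ (2:ℝ) ^ Nat.clog 2 ⌈r⌉₊ := by
      have h1 : (⌈r⌉₊ : ℝ) ≤ (2:ℝ) ^ Nat.clog 2 ⌈r⌉₊ := by
        exact_mod_cast Nat.le_pow_clog one_lt_two ⌈r⌉₊
      exact (Nat.le_ceil r).trans h1
    have hJ4r : (2:ℝ) ^ Nat.clog 2 ⌈r⌉₊ ≤ 4 * r := by
      have h1 : (2:ℕ) ^ Nat.clog 2 ⌈r⌉₊ ≤ 2 * ⌈r⌉₊ := two_pow_clog_le _ hceil1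
      have h2 : ((2:ℕ) ^ Nat.clog 2 ⌈r⌉₊ : ℝ) ≤ 2 * (⌈r⌉₊ : ℝ) := by exact_mod_cast h1
      have h3 : (⌈r⌉₊ : ℝ) < r + 1 := Nat.ceil_lt_add_one hr0.le
      push_cast at h2
      linarith
    -- assemble
    calc (∑' j : ℕ, ∑' b : {i : {i : Fin d → ℤ // i ≠ k} //
            Nat.clog 2 (snorm' d (k - i.1)) = j},
          ENNReal.ofReal |x b.1.1 / (snorm' d (k - b.1.1) : ℝ) ^ ((d:ℝ) - α)|)
        ≤ ∑' j : ℕ,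
            ENNReal.ofReal ((2:ℝ) ^ ((d:ℝ) - α) * ((2:ℝ) ^ j) ^ (α - (d:ℝ))) *
              ENNReal.ofReal (∑ i ∈ cubeS d k (2 ^ j), |x i|) :=
          ENNReal.tsum_le_tsum hfib
      _ ≤ ∑' j : ℕ,
            ((if j < Nat.clog 2 ⌈r⌉₊ then
                ENNReal.ofReal (K1 * maxOp d x k) * ENNReal.ofReal ((2:ℝ) ^ α) ^ j
              else 0) +
             (if j < Nat.clog 2 ⌈r⌉₊ then 0
              else ENNReal.ofReal (K1 * morreyNorm d p q x) *
                ENNReal.ofReal ((2:ℝ) ^ (-(d/q - α))) ^ j)) := by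
          apply ENNReal.tsum_le_tsum
          intro j
          by_cases h : j < Nat.clog 2 ⌈r⌉₊
          · simpa [h] using hPj j
          · simpa [h] using hQj j
      _ = (∑' j : ℕ, if j < Nat.clog 2 ⌈r⌉₊ then
              ENNReal.ofReal (K1 * maxOp d x k) * ENNReal.ofReal ((2:ℝ) ^ α) ^ j
            else 0) +
          (∑' j : ℕ, if j < Nat.clog 2 ⌈r⌉₊ then 0
            else ENNReal.ofReal (K1 * morreyNorm d p q x) *
              ENNReal.ofReal ((2:ℝ) ^ (-(d/q - α))) ^ j) := ENNReal.tsum_add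
      _ ≤ ENNReal.ofReal (K1 * maxOp d x k *
              (((2:ℝ) ^ α) ^ Nat.clog 2 ⌈r⌉₊ / ((2:ℝ) ^ α - 1))) +
          ENNReal.ofReal (K1 * morreyNorm d p q x *
              (((2:ℝ) ^ (-(d/q - α))) ^ Nat.clog 2 ⌈r⌉₊ * (1 - (2:ℝ) ^ (-(d/q - α)))⁻¹)) :=
          add_le_add (part1_bound _ (mul_nonneg hK1.le hM0) h2α)
            (part2_bound _ (mul_nonneg hK1.le hX0) h2β0.le h2β1)
      _ ≤ ENNReal.ofReal (K1 * (c1 + c2) *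
            (r ^ α * maxOp d x k + r ^ (α - d / q) * morreyNorm d p q x)) := by
          rw [← ENNReal.ofReal_add
            (mul_nonneg (mul_nonneg hK1.le hM0)
              (div_nonneg (by positivity) (by linarith)))
            (mul_nonneg (mul_nonneg hK1.le hX0)
              (mul_nonneg (by positivity) (inv_nonneg.mpr (by linarith))))]
          apply ENNReal.ofReal_le_ofReal
          -- final real inequality
          have hpow1 : ((2:ℝ) ^ α) ^ Nat.clog 2 ⌈r⌉₊ ≤ (4 * r) ^ α := by
            rw [pow_rpow_swap, mul_comm α ((Nat.clog 2 ⌈r⌉₊ : ℕ) : ℝ), ← rpow_natpow]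
            exact Real.rpow_le_rpow (by positivity) hJ4r hα.le
          have hpow2 : ((2:ℝ) ^ (-(d/q - α))) ^ Nat.clog 2 ⌈r⌉₊ ≤ r ^ (-(d/q - α)) := by
            rw [pow_rpow_swap, mul_comm (-(d/q - α)) ((Nat.clog 2 ⌈r⌉₊ : ℕ) : ℝ),
              ← rpow_natpow]
            exact Real.rpow_le_rpow_of_nonpos hr0 hJr (by linarith)
          have h4r : (4 * r) ^ α = 4 ^ α * r ^ α :=
            Real.mul_rpow (by norm_num) hr0.le
          have hexp : α - d / q = -(d/q - α) := by ring
          rw [hexp]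
          have hAr : 0 ≤ r ^ α * maxOp d x k :=
            mul_nonneg (Real.rpow_nonneg hr0.le α) hM0
          have hBr : 0 ≤ r ^ (-(d/q - α)) * morreyNorm d p q x :=
            mul_nonneg (Real.rpow_nonneg hr0.le _) hX0
          have step1 : K1 * maxOp d x k *
              (((2:ℝ) ^ α) ^ Nat.clog 2 ⌈r⌉₊ / ((2:ℝ) ^ α - 1)) ≤
              K1 * c1 * (r ^ α * maxOp d x k) := by
            have h5 : ((2:ℝ) ^ α) ^ Nat.clog 2 ⌈r⌉₊ / ((2:ℝ) ^ α - 1) ≤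
                (4 ^ α * r ^ α) / ((2:ℝ) ^ α - 1) :=
              (div_le_div_iff_of_pos_right (by linarith)).mpr (h4r ▸ hpow1)
            calc K1 * maxOp d x k * (((2:ℝ) ^ α) ^ Nat.clog 2 ⌈r⌉₊ / ((2:ℝ) ^ α - 1))
                ≤ K1 * maxOp d x k * ((4 ^ α * r ^ α) / ((2:ℝ) ^ α - 1)) :=
                  mul_le_mul_of_nonneg_left h5 (mul_nonneg hK1.le hM0)
              _ = K1 * c1 * (r ^ α * maxOp d x k) := by rw [hc1def]; ring
          have step2 : K1 * morreyNorm d p q x *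
              (((2:ℝ) ^ (-(d/q - α))) ^ Nat.clog 2 ⌈r⌉₊ * (1 - (2:ℝ) ^ (-(d/q - α)))⁻¹) ≤
              K1 * c2 * (r ^ (-(d/q - α)) * morreyNorm d p q x) := by
            have h6 : ((2:ℝ) ^ (-(d/q - α))) ^ Nat.clog 2 ⌈r⌉₊ *
                (1 - (2:ℝ) ^ (-(d/q - α)))⁻¹ ≤
                r ^ (-(d/q - α)) * (1 - (2:ℝ) ^ (-(d/q - α)))⁻¹ :=
              mul_le_mul_of_nonneg_right hpow2 (inv_nonneg.mpr (by linarith))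
            calc K1 * morreyNorm d p q x *
                  (((2:ℝ) ^ (-(d/q - α))) ^ Nat.clog 2 ⌈r⌉₊ *
                    (1 - (2:ℝ) ^ (-(d/q - α)))⁻¹)
                ≤ K1 * morreyNorm d p q x *
                    (r ^ (-(d/q - α)) * (1 - (2:ℝ) ^ (-(d/q - α)))⁻¹) :=
                  mul_le_mul_of_nonneg_left h6 (mul_nonneg hK1.le hX0)
              _ = K1 * c2 * (r ^ (-(d/q - α)) * morreyNorm d p q x) := by
                  rw [hc2def]; ring
          have hfinal : K1 * c1 * (r ^ α * maxOp d x k) +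
              K1 * c2 * (r ^ (-(d/q - α)) * morreyNorm d p q x) ≤
              K1 * (c1 + c2) *
                (r ^ α * maxOp d x k + r ^ (-(d/q - α)) * morreyNorm d p q x) := by
            nlinarith [mul_nonneg (mul_nonneg hK1.le hc1.le) hBr,
              mul_nonneg (mul_nonneg hK1.le hc2.le) hAr]
          linarith [step1, step2, hfinal]
  -- conversion to the real estimate
  have hRHS0 : 0 ≤ K1 * (c1 + c2) *
      (r ^ α * maxOp d x k + r ^ (α - d / q) * morreyNorm d p q x) :=
    mul_nonneg (by positivity)
      (add_nonneg (mul_nonneg (Real.rpow_nonneg hr0.le _) hM0)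
        (mul_nonneg (Real.rpow_nonneg hr0.le _) hX0))
  have hGnn : ∀ i : {i : Fin d → ℤ // i ≠ k},
      ENNReal.ofReal |x i.1 / (snorm' d (k - i.1) : ℝ) ^ ((d:ℝ) - α)| =
        (‖x i.1 / (snorm' d (k - i.1) : ℝ) ^ ((d:ℝ) - α)‖₊ : ℝ≥0∞) := by
    intro i
    rw [← Real.norm_eq_abs, ofReal_norm, enorm_eq_nnnorm]
  rw [tsum_congr hGnn] at key
  have hne : (∑' i : {i : Fin d → ℤ // i ≠ k},
      (‖x i.1 / (snorm' d (k - i.1) : ℝ) ^ ((d:ℝ) - α)‖₊ : ℝ≥0∞)) ≠ ⊤ :=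
    ne_top_of_le_ne_top ENNReal.ofReal_ne_top key
  have hsum : Summable (fun i : {i : Fin d → ℤ // i ≠ k} =>
      ‖x i.1 / (snorm' d (k - i.1) : ℝ) ^ ((d:ℝ) - α)‖₊) :=
    ENNReal.tsum_coe_ne_top_iff_summable.mp hne
  have hsumnorm : Summable (fun i : {i : Fin d → ℤ // i ≠ k} =>
      ‖x i.1 / (snorm' d (k - i.1) : ℝ) ^ ((d:ℝ) - α)‖) := by
    simpa [coe_nnnorm] using NNReal.summable_coe.mpr hsum
  have h1 : |rieszPot d α x k| ≤ ∑' i : {i : Fin d → ℤ // i ≠ k},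
      ‖x i.1 / (snorm' d (k - i.1) : ℝ) ^ ((d:ℝ) - α)‖ := by
    have hre : rieszPot d α x k = ∑' i : {i : Fin d → ℤ // i ≠ k},
        x i.1 / (snorm' d (k - i.1) : ℝ) ^ ((d:ℝ) - α) := rfl
    rw [hre, ← Real.norm_eq_abs]
    exact norm_tsum_le_tsum_norm hsumnorm
  have h2 : (∑' i : {i : Fin d → ℤ // i ≠ k},
      ‖x i.1 / (snorm' d (k - i.1) : ℝ) ^ ((d:ℝ) - α)‖) ≤
      K1 * (c1 + c2) *
        (r ^ α * maxOp d x k + r ^ (α - d / q) * morreyNorm d p q x) := by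
    have e3 := ENNReal.toReal_mono ENNReal.ofReal_ne_top key
    rw [ENNReal.toReal_ofReal hRHS0,
      ENNReal.tsum_toReal_eq (fun i => ENNReal.coe_ne_top)] at e3
    calc (∑' i : {i : Fin d → ℤ // i ≠ k},
        ‖x i.1 / (snorm' d (k - i.1) : ℝ) ^ ((d:ℝ) - α)‖)
        = ∑' i : {i : Fin d → ℤ // i ≠ k},
            ((‖x i.1 / (snorm' d (k - i.1) : ℝ) ^ ((d:ℝ) - α)‖₊ : ℝ≥0∞)).toReal := by
          refine tsum_congr fun i => ?_
          rw [ENNReal.coe_toReal, coe_nnnorm]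
      _ ≤ _ := e3
  exact h1.trans h2
end
end
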